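/- arXiv:1206.0441 — 5 statements merged into one kernel-verified Lean document; each statement's English description precedes it below -/
import Mathlib

section
/- Let V be a finite-dimensional real inner product space of dimension d, S an invertible symmetric endomorphism of V with real eigenvalues λ₁,…,λ_d (with multiplicity), and m ∈ V. Then lim_{ε→0⁺} ∫_V e^{−ε‖x‖²} e^{−(i/2)⟨x−m, S(x−m)⟩} dx exists and equals (2π)^{d/2} / ∏_k √(i λ_k), where √(iλ) := e^{(πi/4)·sgn(λ)}·|λ|^{1/2}. -/
open MeasureTheory Filter Topology Complex

lemma expw (r s : ℝ) (hr : 0 < r) :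
    Complex.exp ((Real.log r : ℂ) + (s : ℂ) * (Real.pi/2) * Complex.I)
      = (r : ℂ) * ((Real.cos (s * (Real.pi/2)) : ℂ) + (Real.sin (s * (Real.pi/2)) : ℂ) * Complex.I) := by
  rw [Complex.exp_add]
  congr 1
  · rw [← Complex.ofReal_exp, Real.exp_log hr]
  · rw [Complex.ofReal_cos, Complex.ofReal_sin, ← Complex.exp_mul_I]
    push_cast
    ring_nf

lemma sqrtFactor {l : ℝ} (hl : l ≠ 0) :
    ((Real.pi : ℂ) / (Complex.I * l / 2)) ^ (1/2 : ℂ) =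
      (((2 * Real.pi) ^ ((1:ℝ)/2) : ℝ) : ℂ) /
        (Complex.exp (Real.pi * Complex.I / 4 * (Real.sign l : ℝ)) *
          ((|l| ^ ((1:ℝ)/2) : ℝ) : ℂ)) := by
  have h2 : (0:ℝ) < 2 * Real.pi / |l| := by positivity
  have hlc : (l : ℂ) ≠ 0 := by exact_mod_cast hl
  set s : ℝ := Real.sign l with hs
  have hsval : s = 1 ∧ 0 < l ∨ s = -1 ∧ l < 0 := by
    rcases hl.lt_or_gt with h | h
    · exact Or.inr ⟨Real.sign_of_neg h, h⟩
    · exact Or.inl ⟨Real.sign_of_pos h, h⟩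
  set w : ℂ := (Real.log (2*Real.pi/|l|) : ℂ) + ((-s : ℝ) : ℂ) * (Real.pi/2) * Complex.I with hw
  have hzw : (Real.pi : ℂ) / (Complex.I * l / 2) = Complex.exp w := by
    rw [hw, expw _ _ h2]
    rcases hsval with ⟨h1, h2'⟩ | ⟨h1, h2'⟩
    · rw [h1, abs_of_pos h2']
      norm_num
      rw [div_eq_iff (by simp [Complex.ext_iff, Real.pi_ne_zero, hl])]
      push_cast
      ring_nf
      simp [Complex.I_sq]
      rw [mul_inv_cancel_right₀ hlc]
    · rw [h1, abs_of_neg h2']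
      norm_num
      rw [div_eq_iff (by simp [Complex.ext_iff, Real.pi_ne_zero, hl])]
      push_cast
      ring_nf
      simp [Complex.I_sq]
      rw [mul_inv_cancel_right₀ hlc]
  have him : -Real.pi < w.im ∧ w.im ≤ Real.pi := by
    rw [hw]
    simp
    rcases hsval with ⟨h1, _⟩ | ⟨h1, _⟩ <;> rw [h1] <;>
      constructor <;> nlinarith [Real.pi_pos]
  rw [hzw, Complex.cpow_def_of_ne_zero (Complex.exp_ne_zero w),
    Complex.log_exp him.1 him.2]
  have : w * (1/2 : ℂ) = (Real.log (2*Real.pi/|l|) / 2 : ℝ) + ((-s : ℝ) : ℂ) * (Real.pi/4) * Complex.I := by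
    rw [hw]; push_cast; ring
  rw [this, Complex.exp_add]
  have h3 : Complex.exp ((Real.log (2*Real.pi/|l|) / 2 : ℝ) : ℂ) = (((2*Real.pi/|l|) ^ ((1:ℝ)/2) : ℝ) : ℂ) := by
    rw [← Complex.ofReal_exp, Real.rpow_def_of_pos h2]
    norm_num
    ring_nf
  rw [h3]
  have habs : (0:ℝ) < |l| ^ ((1:ℝ)/2) := Real.rpow_pos_of_pos (abs_pos.mpr hl) _
  have hexp : Complex.exp (((-s : ℝ) : ℂ) * (Real.pi/4) * Complex.I) *
      Complex.exp (Real.pi * Complex.I / 4 * (s : ℝ)) = 1 := by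
    rw [← Complex.exp_add]
    norm_num
    ring_nf
    exact Complex.exp_zero
  rw [eq_div_iff (mul_ne_zero (Complex.exp_ne_zero _) (by exact_mod_cast habs.ne'))]
  have hreal : (2*Real.pi/|l|) ^ ((1:ℝ)/2) * (|l| ^ ((1:ℝ)/2)) = (2*Real.pi) ^ ((1:ℝ)/2) := by
    rw [Real.div_rpow (by positivity) (abs_nonneg l)]
    field_simp
  calc ((2*Real.pi/|l|) ^ ((1:ℝ)/2) : ℝ) * Complex.exp (((-s : ℝ) : ℂ) * (Real.pi/4) * Complex.I) *
        (Complex.exp (Real.pi * Complex.I / 4 * (s : ℝ)) * ((|l| ^ ((1:ℝ)/2) : ℝ) : ℂ))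
      = (((2*Real.pi/|l|) ^ ((1:ℝ)/2) * (|l| ^ ((1:ℝ)/2)) : ℝ) : ℂ) *
        (Complex.exp (((-s : ℝ) : ℂ) * (Real.pi/4) * Complex.I) *
          Complex.exp (Real.pi * Complex.I / 4 * (s : ℝ))) := by push_cast; ring
    _ = _ := by rw [hexp, hreal, mul_one]

lemma tendsto_1d (l q : ℝ) (hl : l ≠ 0) :
    Tendsto (fun ε : ℝ => ∫ t : ℝ, Complex.exp ((-(ε:ℂ) - Complex.I*l/2) * t^2 +
        ((-(2*ε*q) : ℝ) : ℂ) * t + ((-(ε*q^2) : ℝ) : ℂ)))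
      (𝓝[>] (0:ℝ)) (𝓝 (((Real.pi:ℂ)/(Complex.I*l/2))^(1/2 : ℂ))) := by
  have hlc : (l : ℂ) ≠ 0 := by exact_mod_cast hl
  have hden : ∀ ε : ℝ, 0 ≤ ε → (ε:ℂ) + Complex.I*l/2 ≠ 0 := by
    intro ε hε h
    have := congrArg Complex.im h
    simp [Complex.add_im, Complex.div_im, Complex.mul_im] at this
    exact hl this
  -- the closed form
  have key : ∀ ε ∈ Set.Ioi (0:ℝ),
      (∫ t : ℝ, Complex.exp ((-(ε:ℂ) - Complex.I*l/2) * t^2 + ((-(2*ε*q) : ℝ) : ℂ) * t + ((-(ε*q^2) : ℝ) : ℂ)))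
      = ((Real.pi:ℂ)/((ε:ℂ) + Complex.I*l/2))^(1/2 : ℂ) *
        Complex.exp (((-(ε*q^2) : ℝ) : ℂ) - (((-(2*ε*q) : ℝ) : ℂ))^2 / (4 * (-(ε:ℂ) - Complex.I*l/2))) := by
    intro ε hε
    have hre : (-(ε:ℂ) - Complex.I*l/2).re = -ε := by
      simp [Complex.div_re]
    rw [integral_cexp_quadratic (by rw [hre]; simpa using hε) _ _]
    congr 2
    ring
  refine Tendsto.congr' (f₁ := fun ε : ℝ => ((Real.pi:ℂ)/((ε:ℂ) + Complex.I*l/2))^(1/2 : ℂ) *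
      Complex.exp (((-(ε*q^2) : ℝ) : ℂ) - (((-(2*ε*q) : ℝ) : ℂ))^2 / (4 * (-(ε:ℂ) - Complex.I*l/2)))) ?_ ?_
  · filter_upwards [self_mem_nhdsWithin] with ε hε
    exact (key ε hε).symm
  · have hmain : Tendsto (fun ε : ℝ => ((Real.pi:ℂ)/((ε:ℂ) + Complex.I*l/2))^(1/2 : ℂ))
        (𝓝 (0:ℝ)) (𝓝 (((Real.pi:ℂ)/(Complex.I*l/2))^(1/2 : ℂ))) := by
      have hc : ContinuousAt (fun ε : ℝ => (Real.pi:ℂ)/((ε:ℂ) + Complex.I*l/2)) 0 := by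
        apply ContinuousAt.div continuousAt_const
        · fun_prop
        · simpa using hden 0 le_rfl
      have hsp : (Real.pi:ℂ)/(Complex.I*l/2) ∈ Complex.slitPlane := by
        refine Complex.mem_slitPlane_iff.2 (Or.inr ?_)
        have h5 : (Real.pi:ℂ)/(Complex.I*l/2) = ((-(2*Real.pi/l) : ℝ):ℂ) * Complex.I := by
          field_simp
          ring_nf
          simp [Complex.I_sq]
          field_simp
        rw [h5]
        simp [Real.pi_ne_zero, hl]
      have hcp : ContinuousAt (fun z : ℂ => z ^ (1/2:ℂ)) ((Real.pi:ℂ)/(Complex.I*l/2)) :=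
        continuousAt_cpow_const hsp
      have hval : (fun ε : ℝ => (Real.pi:ℂ)/((ε:ℂ) + Complex.I*l/2)) 0
          = (Real.pi:ℂ)/(Complex.I*l/2) := by norm_num
      have ht := (ContinuousAt.comp (g := fun z : ℂ => z ^ (1/2:ℂ)) (by simpa using hcp) hc).tendsto
      simp only [Function.comp, Complex.ofReal_zero, zero_add] at ht
      exact ht
    have hexp : Tendsto (fun ε : ℝ => Complex.exp (((-(ε*q^2) : ℝ) : ℂ) -
        (((-(2*ε*q) : ℝ) : ℂ))^2 / (4 * (-(ε:ℂ) - Complex.I*l/2)))) (𝓝 (0:ℝ)) (𝓝 1) := by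
      have hd0 : (4:ℂ) * (-(((0:ℝ)):ℂ) - Complex.I*l/2) ≠ 0 := by
        have h6 : (4:ℂ) * (-(((0:ℝ)):ℂ) - Complex.I*l/2) = -(2*Complex.I*l) := by
          push_cast; ring
        rw [h6]
        simp [Complex.I_ne_zero, hlc]
      have hc : ContinuousAt (fun ε : ℝ => ((-(ε*q^2) : ℝ) : ℂ) -
          (((-(2*ε*q) : ℝ) : ℂ))^2 / (4 * (-(ε:ℂ) - Complex.I*l/2))) 0 := by
        apply ContinuousAt.sub
        · fun_prop
        · apply ContinuousAt.div
          · fun_prop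
          · fun_prop
          · exact hd0
      have ht := (Complex.continuous_exp.continuousAt.comp hc).tendsto
      simp only [Function.comp_def] at ht
      simpa using ht
    have := hmain.mul hexp
    rw [mul_one] at this
    exact this.mono_left nhdsWithin_le_nhds

lemma integral_eq_prod (d : ℕ)
    (S : EuclideanSpace ℝ (Fin d) →ₗ[ℝ] EuclideanSpace ℝ (Fin d))
    (m : EuclideanSpace ℝ (Fin d)) (lam : Fin d → ℝ)
    (b : OrthonormalBasis (Fin d) ℝ (EuclideanSpace ℝ (Fin d)))
    (hdiag : ∀ i, S (b i) = lam i • b i) (ε : ℝ) :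
    (∫ x : EuclideanSpace ℝ (Fin d),
        Complex.exp (-((ε * ‖x‖ ^ 2 : ℝ) : ℂ)) *
          Complex.exp (-(Complex.I / 2) * ((inner ℝ (x - m) (S (x - m)) : ℝ) : ℂ)))
      = ∏ i, ∫ t : ℝ, Complex.exp ((-(ε:ℂ) - Complex.I*(lam i)/2) * t^2 +
          ((-(2*ε*(b.repr m i)) : ℝ) : ℂ) * t + ((-(ε*(b.repr m i)^2) : ℝ) : ℂ)) := by
  set p : EuclideanSpace ℝ (Fin d) := b.repr m with hp
  set F : EuclideanSpace ℝ (Fin d) → ℂ := fun x =>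
      Complex.exp (-((ε * ‖x‖ ^ 2 : ℝ) : ℂ)) *
        Complex.exp (-(Complex.I / 2) * ((inner ℝ (x - m) (S (x - m)) : ℝ) : ℂ)) with hF
  -- pointwise formula for F (b.repr.symm c + m)
  have hpt : ∀ c : EuclideanSpace ℝ (Fin d), F (b.repr.symm c + m) =
      ∏ i, Complex.exp ((-(ε:ℂ) - Complex.I*(lam i)/2) * (c i)^2 +
        ((-(2*ε*(p i)) : ℝ) : ℂ) * (c i) + ((-(ε*(p i)^2) : ℝ) : ℂ)) := by
    intro c
    have hnorm : ‖b.repr.symm c + m‖ ^ 2 = ∑ i, (c i + p i)^2 := by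
      have h1 : ‖b.repr.symm c + m‖ = ‖c + p‖ := by
        rw [← b.repr.norm_map (b.repr.symm c + m), map_add, b.repr.apply_symm_apply]
      rw [h1, EuclideanSpace.norm_eq, Real.sq_sqrt (by positivity)]
      refine Finset.sum_congr rfl fun i _ => ?_
      simp [Real.norm_eq_abs, sq_abs, PiLp.add_apply]
    have hS : S (b.repr.symm c) = b.repr.symm (WithLp.toLp 2 (fun i => lam i * c i)) := by
      rw [← b.sum_repr_symm, ← b.sum_repr_symm, map_sum]
      refine Finset.sum_congr rfl fun i _ => ?_
      rw [_root_.map_smul, hdiag i, smul_smul, mul_comm]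
    have hinner : (inner ℝ (b.repr.symm c) (S (b.repr.symm c)) : ℝ) = ∑ i, lam i * (c i)^2 := by
      rw [hS, LinearIsometryEquiv.inner_map_map]
      · rw [PiLp.inner_apply]
        refine Finset.sum_congr rfl fun i _ => ?_
        simp [RCLike.inner_apply]
        ring
    rw [hF]
    simp only [add_sub_cancel_right]
    rw [hnorm, hinner, ← Complex.exp_sum, ← Complex.exp_add]
    congr 1
    push_cast
    rw [Finset.mul_sum, Finset.mul_sum, ← Finset.sum_neg_distrib, ← Finset.sum_add_distrib]
    exact Finset.sum_congr rfl fun i _ => by ring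
  calc (∫ x, F x)
      = ∫ y, F (y + m) := (integral_add_right_eq_self F m).symm
    _ = ∫ c : EuclideanSpace ℝ (Fin d), F (b.repr.symm c + m) := by
        exact ((b.measurePreserving_repr_symm).integral_comp
          (b.measurableEquiv.symm.measurableEmbedding) (fun y => F (y + m))).symm
    _ = ∫ c : EuclideanSpace ℝ (Fin d), ∏ i, Complex.exp ((-(ε:ℂ) - Complex.I*(lam i)/2) * (c i)^2 +
          ((-(2*ε*(p i)) : ℝ) : ℂ) * (c i) + ((-(ε*(p i)^2) : ℝ) : ℂ)) := by
        simp_rw [hpt]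
    _ = ∫ x : Fin d → ℝ, ∏ i, Complex.exp ((-(ε:ℂ) - Complex.I*(lam i)/2) * (x i)^2 +
          ((-(2*ε*(p i)) : ℝ) : ℂ) * (x i) + ((-(ε*(p i)^2) : ℝ) : ℂ)) := by
        exact (EuclideanSpace.volume_preserving_symm_measurableEquiv_toLp (ι := Fin d)).integral_comp
          (MeasurableEquiv.toLp 2 (Fin d → ℝ)).symm.measurableEmbedding
          (fun x : Fin d → ℝ => ∏ i, Complex.exp ((-(ε:ℂ) - Complex.I*(lam i)/2) * (x i)^2 +
            ((-(2*ε*(p i)) : ℝ) : ℂ) * (x i) + ((-(ε*(p i)^2) : ℝ) : ℂ)))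
    _ = ∏ i, ∫ t : ℝ, Complex.exp ((-(ε:ℂ) - Complex.I*(lam i)/2) * t^2 +
          ((-(2*ε*(p i)) : ℝ) : ℂ) * t + ((-(ε*(p i)^2) : ℝ) : ℂ)) := by
        exact integral_fintype_prod_eq_prod
          (fun i (t : ℝ) => Complex.exp ((-(ε:ℂ) - Complex.I*(lam i)/2) * t^2 +
            ((-(2*ε*(p i)) : ℝ) : ℂ) * t + ((-(ε*(p i)^2) : ℝ) : ℂ)))

/-- Let `V` be a `d`-dimensional real inner product space, `S` an invertible symmetric
endomorphism of `V`, diagonalized by an orthonormal basis `b` with (nonzero) real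
eigenvalues `lam i`, and `m ∈ V`.  Then
`lim_{ε→0⁺} ∫_V e^{−ε‖x‖²} e^{−(i/2)⟨x−m, S(x−m)⟩} dx = (2π)^{d/2} / ∏_k √(i λ_k)`,
where `√(iλ) := e^{(πi/4)·sgn(λ)}·|λ|^{1/2}`. -/
theorem stmt_4 (d : ℕ)
    (S : EuclideanSpace ℝ (Fin d) →ₗ[ℝ] EuclideanSpace ℝ (Fin d))
    (m : EuclideanSpace ℝ (Fin d)) (lam : Fin d → ℝ)
    (b : OrthonormalBasis (Fin d) ℝ (EuclideanSpace ℝ (Fin d)))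
    (hdiag : ∀ i, S (b i) = lam i • b i) (hinv : ∀ i, lam i ≠ 0) :
    Tendsto (fun ε : ℝ =>
        ∫ x : EuclideanSpace ℝ (Fin d),
          Complex.exp (-((ε * ‖x‖ ^ 2 : ℝ) : ℂ)) *
            Complex.exp (-(Complex.I / 2) *
              ((inner ℝ (x - m) (S (x - m)) : ℝ) : ℂ)))
      (𝓝[>] (0 : ℝ))
      (𝓝 ((((2 * Real.pi) ^ ((d : ℝ) / 2) : ℝ) : ℂ) /
        ∏ i, (Complex.exp (Real.pi * Complex.I / 4 * (Real.sign (lam i) : ℝ)) *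
          ((|lam i| ^ ((1 : ℝ) / 2) : ℝ) : ℂ)))) := by
  have hT : Tendsto (fun ε : ℝ => ∏ i, ∫ t : ℝ, Complex.exp ((-(ε:ℂ) - Complex.I*(lam i)/2) * t^2 +
        ((-(2*ε*(b.repr m i)) : ℝ) : ℂ) * t + ((-(ε*(b.repr m i)^2) : ℝ) : ℂ)))
      (𝓝[>] (0:ℝ)) (𝓝 (∏ i : Fin d, ((Real.pi:ℂ)/(Complex.I*(lam i)/2))^(1/2 : ℂ))) :=
    tendsto_finset_prod _ (fun i _ => tendsto_1d (lam i) (b.repr m i) (hinv i))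
  have hprod : ∏ i : Fin d, ((Real.pi:ℂ)/(Complex.I*(lam i)/2))^(1/2 : ℂ)
      = (((2 * Real.pi) ^ ((d : ℝ) / 2) : ℝ) : ℂ) /
        ∏ i, (Complex.exp (Real.pi * Complex.I / 4 * (Real.sign (lam i) : ℝ)) *
          ((|lam i| ^ ((1 : ℝ) / 2) : ℝ) : ℂ)) := by
    rw [Finset.prod_congr rfl (fun i _ => sqrtFactor (hinv i)), Finset.prod_div_distrib,
      Finset.prod_const]
    congr 1
    rw [Finset.card_univ, Fintype.card_fin, ← Complex.ofReal_pow,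
      ← Real.rpow_natCast ((2*Real.pi) ^ ((1:ℝ)/2)) d, ← Real.rpow_mul (by positivity)]
    norm_num
    congr 1
    ring
  rw [hprod] at hT
  exact hT.congr (fun ε => (integral_eq_prod d S m lam b hdiag ε).symm)
end

section
/- Let V be a finite-dimensional real inner product space, S an invertible symmetric endomorphism of V, and dμ(x) = (1/Z) e^{−(i/2)⟨x, Sx⟩} dx the normalized (Z chosen so that ∫_∼ 1 dμ = 1) non-degenerate centered oscillatory Gauss measure. Then for all v, w ∈ V: lim_{ε→0⁺} ∫_V ⟨v,x⟩ e^{−ε‖x‖²} dμ(x) = 0 and lim_{ε→0⁺} ∫_V ⟨v,x⟩⟨w,x⟩ e^{−ε‖x‖²} dμ(x) = (1/i)·⟨v, S⁻¹ w⟩. -/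
open MeasureTheory Filter Topology Complex Real
open scoped Real

section Aux

lemma gauss1 {b : ℂ} : ∫ x : ℝ, (x:ℂ) * Complex.exp (-b * (x:ℂ)^2) = 0 := by
  have h : ∀ x : ℝ, ((-x : ℝ) : ℂ) * Complex.exp (-b * ((-x:ℝ):ℂ)^2)
      = -((x:ℂ) * Complex.exp (-b * (x:ℂ)^2)) := by
    intro x; push_cast; ring_nf
  have := MeasureTheory.integral_neg_eq_self
    (fun x : ℝ => (x:ℂ) * Complex.exp (-b * (x:ℂ)^2)) (volume : Measure ℝ)
  simp only [h] at this
  rw [integral_neg] at this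
  linear_combination (-1/2 : ℂ) * this

lemma integrable_sq_mul_cexp {b : ℂ} (hb : 0 < b.re) :
    Integrable fun x : ℝ => (x:ℂ)^2 * Complex.exp (-b * (x:ℂ)^2) := by
  have hre : Integrable fun x : ℝ => x^2 * Real.exp (-b.re * x^2) := by
    have := integrable_rpow_mul_exp_neg_mul_sq hb (by norm_num : (-1:ℝ) < 2)
    simpa [Real.rpow_natCast] using this
  refine ⟨((continuous_ofReal.pow 2).mul (Complex.continuous_exp.comp
    (continuous_const.mul (continuous_ofReal.pow 2)))).aestronglyMeasurable, ?_⟩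
  rw [← hasFiniteIntegral_norm_iff]
  have : ∀ x : ℝ, ‖(x:ℂ)^2 * Complex.exp (-b * (x:ℂ)^2)‖ = x^2 * Real.exp (-b.re * x^2) := by
    intro x
    rw [norm_mul, norm_cexp_neg_mul_sq]
    simp [Complex.norm_real, sq_abs]
  simp only [this]
  exact hre.2

lemma gauss2 {b : ℂ} (hb : 0 < b.re) :
    ∫ x : ℝ, (x:ℂ)^2 * Complex.exp (-b * (x:ℂ)^2)
      = (↑π / b) ^ (1/2 : ℂ) / (2*b) := by
  have hb' : b ≠ 0 := by intro h; rw [h] at hb; simp at hb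
  set F : ℂ → ℂ := fun x => -(2*b)⁻¹ * x * Complex.exp (-b * x^2) with hF
  set f : ℂ → ℂ := fun x => x^2 * Complex.exp (-b * x^2) - (2*b)⁻¹ * Complex.exp (-b * x^2) with hf
  have A : ∀ x : ℂ, HasDerivAt F (f x) x := by
    intro x
    have h1 : HasDerivAt (fun x : ℂ => Complex.exp (-b * x^2)) (-b * (2*x) * Complex.exp (-b*x^2)) x := by
      have := ((hasDerivAt_pow 2 x).const_mul (-b)).cexp
      simpa [mul_comm] using this
    have h2 := (hasDerivAt_id x).mul h1
    have h3 := h2.const_mul (-(2*b)⁻¹)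
    convert h3 using 1
    · ext y; simp [hF]
    · rfl
    · ext y; simp [hF]; ring
    · simp only [hf, id]; field_simp; ring
  set ψ : ℝ → ℝ := fun t => ‖(2*b)⁻¹‖ * (t * Real.exp (-b.re * t^2)) with hψ
  have hnorm : ∀ y : ℝ, ‖F y‖ = ψ |y| := by
    intro y
    simp only [hF, hψ]
    rw [norm_mul, norm_mul, norm_cexp_neg_mul_sq, norm_neg, Complex.norm_real,
      Real.norm_eq_abs]
    rw [_root_.sq_abs]
    ring
  have hψ0 : Tendsto ψ atTop (𝓝 0) := by
    have h1 : Tendsto (fun t : ℝ => t * Real.exp (-b.re * t^2)) atTop (𝓝 0) := by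
      have ho := rpow_mul_exp_neg_mul_sq_isLittleO_exp_neg hb 1
      have hg : Tendsto (fun x : ℝ => Real.exp (-(1/2) * x)) atTop (𝓝 0) := by
        apply Real.tendsto_exp_atBot.comp
        exact Tendsto.const_mul_atTop_of_neg (by norm_num) tendsto_id
      have h1' := ho.isBigO.trans_tendsto hg
      refine Tendsto.congr' ?_ h1'
      filter_upwards [eventually_ge_atTop (0:ℝ)] with t ht
      rw [Real.rpow_one]
    rw [show (0:ℝ) = ‖(2*b)⁻¹‖ * 0 by ring]
    exact h1.const_mul _
  have Atop : Tendsto (fun y : ℝ => F y) atTop (𝓝 0) := by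
    apply tendsto_zero_iff_norm_tendsto_zero.mpr
    simp only [hnorm]
    exact hψ0.comp tendsto_abs_atTop_atTop
  have Abot : Tendsto (fun y : ℝ => F y) atBot (𝓝 0) := by
    apply tendsto_zero_iff_norm_tendsto_zero.mpr
    simp only [hnorm]
    exact hψ0.comp tendsto_abs_atBot_atTop
  have hfint : Integrable fun x : ℝ => f x := by
    simp only [hf]
    exact (integrable_sq_mul_cexp hb).sub ((integrable_cexp_neg_mul_sq hb).const_mul _)
  have key : ∫ x : ℝ, f x = 0 := by
    have := MeasureTheory.integral_of_hasDerivAt_of_tendsto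
      (f := fun x : ℝ => F x) (f' := fun x : ℝ => f x)
      (fun x => (A x).comp_ofReal) hfint Abot Atop
    simpa using this
  have split : (∫ x : ℝ, (x:ℂ)^2 * Complex.exp (-b * (x:ℂ)^2))
      = (∫ x : ℝ, f x) + (2*b)⁻¹ * ∫ x : ℝ, Complex.exp (-b * (x:ℂ)^2) := by
    rw [← integral_const_mul, ← integral_add hfint (((integrable_cexp_neg_mul_sq hb)).const_mul _)]
    congr 1; ext x; simp only [hf]; ring
  rw [split, key, zero_add, integral_gaussian_complex hb]
  field_simp

lemma sqrt_factor {l : ℝ} (hl : l ≠ 0) :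
    ((π : ℂ) / (Complex.I * l / 2)) ^ (1/2 : ℂ)
      * (Complex.exp (π * Complex.I / 4 * ((Real.sign l : ℝ) : ℂ)) * ((|l| ^ ((1:ℝ)/2) : ℝ) : ℂ))
      = (((2*π) ^ ((1:ℝ)/2) : ℝ) : ℂ) := by
  have hπ : (0:ℝ) < π := Real.pi_pos
  rcases hl.lt_or_gt with hneg | hpos
  · have hr : (0:ℝ) < 2*π/|l| := by positivity
    have hz : (π : ℂ) / (Complex.I * l / 2) = ((2*π/|l| : ℝ) : ℂ) * Complex.I := by
      have h0 : (Complex.I * l / 2 : ℂ) ≠ 0 := by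
        simp [Complex.I_ne_zero, hl, div_eq_zero_iff]
      have hlc : (l:ℂ) ≠ 0 := by exact_mod_cast hl
      rw [div_eq_iff h0, abs_of_neg hneg]
      push_cast
      rw [show (2*(π:ℂ)/(-(l:ℂ))) * Complex.I * (Complex.I * l / 2)
          = (2*(π:ℂ)/(-(l:ℂ))) * ((l:ℂ)/2) * (Complex.I*Complex.I) by ring, Complex.I_mul_I]
      field_simp
    have hz0 : ((2*π/|l| : ℝ) : ℂ) * Complex.I ≠ 0 :=
      mul_ne_zero (by exact_mod_cast ne_of_gt hr) Complex.I_ne_zero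
    have harg : Complex.arg (((2*π/|l| : ℝ) : ℂ) * Complex.I) = π/2 := by
      rw [Complex.arg_real_mul _ hr, Complex.arg_I]
    have habs : ‖((2*π/|l| : ℝ) : ℂ) * Complex.I‖ = 2*π/|l| := by
      simp only [norm_mul, Complex.norm_real, Complex.norm_I, norm_neg, mul_one, Real.norm_eq_abs]
      rw [_root_.abs_of_pos hr]
    rw [hz, Complex.cpow_def_of_ne_zero hz0, Complex.log, habs, harg]
    have hsign : Real.sign l = -1 := Real.sign_of_neg hneg
    rw [hsign]
    have hexp : ((Real.log (2*π/|l|) : ℂ) + ↑(π/2) * Complex.I) * (1/2)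
        = ((Real.log (2*π/|l|) / 2 : ℝ) : ℂ) + (π/4 : ℝ) * Complex.I := by
      push_cast; ring
    rw [hexp, Complex.exp_add]
    have h1 : Complex.exp ((Real.log (2*π/|l|) / 2 : ℝ) : ℂ)
        = (((2*π/|l|) ^ ((1:ℝ)/2) : ℝ) : ℂ) := by
      rw [← Complex.ofReal_exp]
      congr 1
      rw [Real.rpow_def_of_pos hr]
      ring_nf
    rw [h1]
    have h2 : Complex.exp (((π:ℝ) : ℂ)/4 * Complex.I) * Complex.exp (↑π * Complex.I / 4 * ((-1 : ℝ) : ℂ))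
        = 1 := by
      rw [← Complex.exp_add, ← Complex.exp_zero]
      congr 1
      push_cast; ring
    have hrw : (2*π/|l|) ^ ((1:ℝ)/2) * |l| ^ ((1:ℝ)/2) = (2*π) ^ ((1:ℝ)/2) := by
      rw [← Real.mul_rpow (by positivity) (abs_nonneg l)]
      congr 1
      field_simp
    calc ((((2*π/|l|) ^ ((1:ℝ)/2) : ℝ) : ℂ) * Complex.exp ((π/4 : ℝ) * Complex.I))
          * (Complex.exp (↑π * Complex.I / 4 * ((-1 : ℝ) : ℂ)) * ((|l| ^ ((1:ℝ)/2) : ℝ) : ℂ))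
        = ((((2*π/|l|) ^ ((1:ℝ)/2) : ℝ) : ℂ) * ((|l| ^ ((1:ℝ)/2) : ℝ) : ℂ))
          * (Complex.exp (((π:ℝ):ℂ)/4 * Complex.I) * Complex.exp (↑π * Complex.I / 4 * ((-1 : ℝ) : ℂ))) := by
          push_cast; ring
      _ = (((2*π) ^ ((1:ℝ)/2) : ℝ) : ℂ) := by
          rw [h2, mul_one, ← Complex.ofReal_mul, hrw]
  · have hr : (0:ℝ) < 2*π/|l| := by positivity
    have hz : (π : ℂ) / (Complex.I * l / 2) = ((2*π/|l| : ℝ) : ℂ) * (-Complex.I) := by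
      have h0 : (Complex.I * l / 2 : ℂ) ≠ 0 := by
        simp [Complex.I_ne_zero, hl, div_eq_zero_iff]
      have hlc : (l:ℂ) ≠ 0 := by exact_mod_cast hl
      rw [div_eq_iff h0, abs_of_pos hpos]
      push_cast
      rw [show (2*(π:ℂ)/(l:ℂ)) * (-Complex.I) * (Complex.I * l / 2)
          = -((2*(π:ℂ)/((l:ℂ))) * ((l:ℂ)/2)) * (Complex.I*Complex.I) by ring, Complex.I_mul_I]
      field_simp
    have hz0 : ((2*π/|l| : ℝ) : ℂ) * (-Complex.I) ≠ 0 :=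
      mul_ne_zero (by exact_mod_cast ne_of_gt hr) (neg_ne_zero.mpr Complex.I_ne_zero)
    have harg : Complex.arg (((2*π/|l| : ℝ) : ℂ) * (-Complex.I)) = -(π/2) := by
      rw [Complex.arg_real_mul _ hr, Complex.arg_neg_I]
    have habs : ‖((2*π/|l| : ℝ) : ℂ) * (-Complex.I)‖ = 2*π/|l| := by
      simp only [norm_mul, Complex.norm_real, Complex.norm_I, norm_neg, mul_one, Real.norm_eq_abs]
      rw [_root_.abs_of_pos hr]
    rw [hz, Complex.cpow_def_of_ne_zero hz0, Complex.log, habs, harg]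
    have hsign : Real.sign l = 1 := Real.sign_of_pos hpos
    rw [hsign]
    have hexp : ((Real.log (2*π/|l|) : ℂ) + ↑(-(π/2)) * Complex.I) * (1/2)
        = ((Real.log (2*π/|l|) / 2 : ℝ) : ℂ) + (-(π/4) : ℝ) * Complex.I := by
      push_cast; ring
    rw [hexp, Complex.exp_add]
    have h1 : Complex.exp ((Real.log (2*π/|l|) / 2 : ℝ) : ℂ)
        = (((2*π/|l|) ^ ((1:ℝ)/2) : ℝ) : ℂ) := by
      rw [← Complex.ofReal_exp]
      congr 1
      rw [Real.rpow_def_of_pos hr]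
      ring_nf
    rw [h1]
    have h2 : Complex.exp (((-(π/4):ℝ) : ℂ) * Complex.I) * Complex.exp (↑π * Complex.I / 4 * ((1 : ℝ) : ℂ))
        = 1 := by
      rw [← Complex.exp_add, ← Complex.exp_zero]
      congr 1
      push_cast; ring
    have hrw : (2*π/|l|) ^ ((1:ℝ)/2) * |l| ^ ((1:ℝ)/2) = (2*π) ^ ((1:ℝ)/2) := by
      rw [← Real.mul_rpow (by positivity) (abs_nonneg l)]
      congr 1
      field_simp
    calc ((((2*π/|l|) ^ ((1:ℝ)/2) : ℝ) : ℂ) * Complex.exp ((-(π/4) : ℝ) * Complex.I))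
          * (Complex.exp (↑π * Complex.I / 4 * ((1 : ℝ) : ℂ)) * ((|l| ^ ((1:ℝ)/2) : ℝ) : ℂ))
        = ((((2*π/|l|) ^ ((1:ℝ)/2) : ℝ) : ℂ) * ((|l| ^ ((1:ℝ)/2) : ℝ) : ℂ))
          * (Complex.exp (((-(π/4):ℝ):ℂ) * Complex.I) * Complex.exp (↑π * Complex.I / 4 * ((1 : ℝ) : ℂ))) := by
          push_cast; ring
      _ = (((2*π) ^ ((1:ℝ)/2) : ℝ) : ℂ) := by
          rw [h2, mul_one, ← Complex.ofReal_mul, hrw]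

lemma moment2 {d : ℕ} (c : Fin d → ℂ) (hc : ∀ i, 0 < (c i).re) (a e : Fin d → ℝ) :
    ∫ y : Fin d → ℝ, (((∑ i, a i * y i : ℝ)) : ℂ) * (((∑ j, e j * y j : ℝ)) : ℂ)
        * ∏ k, Complex.exp (-(c k) * ((y k : ℝ):ℂ)^2)
      = (∏ k, ((π:ℂ)/c k) ^ (1/2:ℂ)) * ∑ i, (a i : ℂ) * (e i : ℂ) * (2 * c i)⁻¹ := by
  classical
  set h : Fin d → Fin d → Fin d → ℝ → ℂ := fun i j k t =>
    (if k = i then (t:ℂ) else 1) * (if k = j then (t:ℂ) else 1)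
      * Complex.exp (-(c k) * (t:ℂ)^2) with hh
  have hint : ∀ i j k, Integrable (h i j k) := by
    intro i j k
    simp only [hh]
    rcases eq_or_ne k i with rfl | hki <;> rcases eq_or_ne k j with rfl | hkj
    · simp only [eq_self_iff_true, if_true]
      have := integrable_sq_mul_cexp (hc k)
      refine this.congr (Eventually.of_forall fun t => ?_)
      ring
    · simp only [eq_self_iff_true, if_true, hkj, if_false]
      have := integrable_mul_cexp_neg_mul_sq (hc k)
      refine this.congr (Eventually.of_forall fun t => ?_)
      ring
    · simp only [eq_self_iff_true, if_true, hki, if_false]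
      have := integrable_mul_cexp_neg_mul_sq (hc k)
      refine this.congr (Eventually.of_forall fun t => ?_)
      ring
    · simp only [hki, hkj, if_false]
      have := integrable_cexp_neg_mul_sq (hc k)
      refine this.congr (Eventually.of_forall fun t => ?_)
      ring
  have hexpand : ∀ y : Fin d → ℝ,
      (((∑ i, a i * y i : ℝ)) : ℂ) * (((∑ j, e j * y j : ℝ)) : ℂ)
        * ∏ k, Complex.exp (-(c k) * ((y k : ℝ):ℂ)^2)
      = ∑ i, ∑ j, ((a i : ℂ) * (e j : ℂ)) * ∏ k, h i j k (y k) := by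
    intro y
    have hprod : ∀ i j, (∏ k, h i j k (y k))
        = ((y i : ℝ):ℂ) * ((y j : ℝ):ℂ) * ∏ k, Complex.exp (-(c k) * ((y k : ℝ):ℂ)^2) := by
      intro i j
      simp only [hh]
      rw [Finset.prod_mul_distrib, Finset.prod_mul_distrib,
        Finset.prod_ite_eq' Finset.univ i (fun k => ((y k : ℝ):ℂ)),
        Finset.prod_ite_eq' Finset.univ j (fun k => ((y k : ℝ):ℂ))]
      simp
    push_cast
    rw [Finset.sum_mul_sum]
    rw [Finset.sum_mul]
    congr 1; ext i
    rw [Finset.sum_mul]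
    congr 1; ext j
    rw [hprod i j]
    ring
  simp only [hexpand]
  rw [integral_finset_sum _ (fun i _ => by
    apply integrable_finset_sum
    intro j _
    exact ((Integrable.fintype_prod (fun k => hint i j k)).const_mul _))]
  have hterm : ∀ i j, (∫ y : Fin d → ℝ, ((a i : ℂ) * (e j : ℂ)) * ∏ k, h i j k (y k))
      = ((a i : ℂ) * (e j : ℂ)) * ∏ k, ∫ t : ℝ, h i j k t := by
    intro i j
    rw [integral_const_mul, integral_fintype_prod_volume_eq_prod]
  have hoff : ∀ i j, i ≠ j → (∏ k, ∫ t : ℝ, h i j k t) = 0 := by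
    intro i j hij
    apply Finset.prod_eq_zero (Finset.mem_univ i)
    simp only [hh, if_pos rfl, if_neg hij]
    simpa [mul_one] using (gauss1 (b := c i))
  have hdiag : ∀ i, (∏ k, ∫ t : ℝ, h i i k t)
      = (∏ k, ((π:ℂ)/c k) ^ (1/2:ℂ)) * (2 * c i)⁻¹ := by
    intro i
    have hfac : ∀ k, (∫ t : ℝ, h i i k t)
        = ((π:ℂ)/c k) ^ (1/2:ℂ) * (if k = i then (2 * c i)⁻¹ else 1) := by
      intro k
      rcases eq_or_ne k i with rfl | hki
      · simp only [hh, eq_self_iff_true, if_true]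
        have heq : ∀ t : ℝ, ((t:ℂ)) * ((t:ℂ)) * Complex.exp (-(c k) * (t:ℂ)^2)
            = (t:ℂ)^2 * Complex.exp (-(c k) * (t:ℂ)^2) := by intro t; ring
        simp only [heq]
        rw [gauss2 (hc k), div_eq_mul_inv]
      · simp only [hh, hki, if_false, one_mul, mul_one]
        rw [integral_gaussian_complex (hc k)]
    simp only [hfac]
    rw [Finset.prod_mul_distrib, Finset.prod_ite_eq' Finset.univ i
      (fun _ => (2 * c i)⁻¹)]
    simp
  have hsum : ∀ i, (∑ j, ((a i : ℂ) * (e j : ℂ)) * ∏ k, ∫ t : ℝ, h i j k t)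
      = (a i : ℂ) * (e i : ℂ) * ((∏ k, ((π:ℂ)/c k) ^ (1/2:ℂ)) * (2 * c i)⁻¹) := by
    intro i
    rw [Finset.sum_eq_single_of_mem i (Finset.mem_univ i)]
    · rw [hdiag i]
    · intro j _ hji
      rw [hoff i j (Ne.symm hji), mul_zero]
  calc (∑ i, ∫ y : Fin d → ℝ, ∑ j, ((a i : ℂ) * (e j : ℂ)) * ∏ k, h i j k (y k))
      = ∑ i, ∑ j, ((a i : ℂ) * (e j : ℂ)) * ∏ k, ∫ t : ℝ, h i j k t := by
        congr 1; ext i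
        rw [integral_finset_sum (μ := volume) _ (fun j _ =>
          ((Integrable.fintype_prod (fun k => hint i j k)).const_mul _))]
        congr 1; ext j
        exact hterm i j
    _ = ∑ i, (a i : ℂ) * (e i : ℂ) * ((∏ k, ((π:ℂ)/c k) ^ (1/2:ℂ)) * (2 * c i)⁻¹) := by
        congr 1; ext i; exact hsum i
    _ = (∏ k, ((π:ℂ)/c k) ^ (1/2:ℂ)) * ∑ i, (a i : ℂ) * (e i : ℂ) * (2 * c i)⁻¹ := by
        rw [Finset.mul_sum]; congr 1; ext i; ring

end Aux

/-- First and second moments of the normalized non-degenerate centered oscillatory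
Gauss measure `dμ(x) = (1/Z) e^{−(i/2)⟨x,Sx⟩} dx`, where
`Z = (2π)^{d/2}/∏_k √(iλ_k)` and `T = S⁻¹`:
`∫_∼ ⟨v,x⟩ dμ = 0` and `∫_∼ ⟨v,x⟩⟨w,x⟩ dμ = (1/i)·⟨v, S⁻¹w⟩`. -/
theorem stmt_5 (d : ℕ)
    (S T : EuclideanSpace ℝ (Fin d) →ₗ[ℝ] EuclideanSpace ℝ (Fin d))
    (lam : Fin d → ℝ)
    (b : OrthonormalBasis (Fin d) ℝ (EuclideanSpace ℝ (Fin d)))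
    (hdiag : ∀ i, S (b i) = lam i • b i) (hinv : ∀ i, lam i ≠ 0)
    (hST : S ∘ₗ T = LinearMap.id) (hTS : T ∘ₗ S = LinearMap.id)
    (v w : EuclideanSpace ℝ (Fin d)) :
    Tendsto (fun ε : ℝ =>
        ∫ x : EuclideanSpace ℝ (Fin d),
          ((inner ℝ v x : ℝ) : ℂ) * Complex.exp (-((ε * ‖x‖ ^ 2 : ℝ) : ℂ)) *
            ((1 : ℂ) / ((((2 * Real.pi) ^ ((d : ℝ) / 2) : ℝ) : ℂ) /
                ∏ i, (Complex.exp (Real.pi * Complex.I / 4 * (Real.sign (lam i) : ℝ)) *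
                  ((|lam i| ^ ((1 : ℝ) / 2) : ℝ) : ℂ))) *
              Complex.exp (-(Complex.I / 2) * ((inner ℝ x (S x) : ℝ) : ℂ))))
      (𝓝[>] (0 : ℝ)) (𝓝 0)
    ∧
    Tendsto (fun ε : ℝ =>
        ∫ x : EuclideanSpace ℝ (Fin d),
          ((inner ℝ v x : ℝ) : ℂ) * ((inner ℝ w x : ℝ) : ℂ) *
            Complex.exp (-((ε * ‖x‖ ^ 2 : ℝ) : ℂ)) *
            ((1 : ℂ) / ((((2 * Real.pi) ^ ((d : ℝ) / 2) : ℝ) : ℂ) /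
                ∏ i, (Complex.exp (Real.pi * Complex.I / 4 * (Real.sign (lam i) : ℝ)) *
                  ((|lam i| ^ ((1 : ℝ) / 2) : ℝ) : ℂ))) *
              Complex.exp (-(Complex.I / 2) * ((inner ℝ x (S x) : ℝ) : ℂ))))
      (𝓝[>] (0 : ℝ))
      (𝓝 ((1 / Complex.I) * ((inner ℝ v (T w) : ℝ) : ℂ))) := by
  classical
  set Zc : ℂ := ((((2 * Real.pi) ^ ((d : ℝ) / 2) : ℝ) : ℂ) /
      ∏ i, (Complex.exp (Real.pi * Complex.I / 4 * (Real.sign (lam i) : ℝ)) *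
        ((|lam i| ^ ((1 : ℝ) / 2) : ℝ) : ℂ))) with hZc
  constructor
  · -- first moment: the integral vanishes identically by oddness
    have hzero : ∀ ε : ℝ, (∫ x : EuclideanSpace ℝ (Fin d),
        ((inner ℝ v x : ℝ) : ℂ) * Complex.exp (-((ε * ‖x‖ ^ 2 : ℝ) : ℂ)) *
          ((1 : ℂ) / Zc * Complex.exp (-(Complex.I / 2) * ((inner ℝ x (S x) : ℝ) : ℂ)))) = 0 := by
      intro ε
      set f : EuclideanSpace ℝ (Fin d) → ℂ := fun x =>
        ((inner ℝ v x : ℝ) : ℂ) * Complex.exp (-((ε * ‖x‖ ^ 2 : ℝ) : ℂ)) *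
          ((1 : ℂ) / Zc * Complex.exp (-(Complex.I / 2) * ((inner ℝ x (S x) : ℝ) : ℂ))) with hf
      have hodd : ∀ x, f (-x) = - f x := by
        intro x
        simp only [hf, inner_neg_right, inner_neg_left, map_neg, inner_neg_neg, neg_neg, norm_neg]
        push_cast
        ring
      have h1 := MeasureTheory.integral_neg_eq_self f (volume : Measure (EuclideanSpace ℝ (Fin d)))
      simp only [hodd] at h1
      rw [integral_neg] at h1
      linear_combination (-1/2 : ℂ) * h1
    simp only [hzero]
    exact tendsto_const_nhds
  · -- second moment
    set c : ℝ → Fin d → ℂ := fun ε i => (ε : ℂ) + Complex.I * (lam i : ℂ) / 2 with hc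
    set a : Fin d → ℝ := fun i => b.repr v i with ha
    set e : Fin d → ℝ := fun i => b.repr w i with he
    set G : ℝ → ℂ := fun ε => (1 / Zc) *
        ((∏ i, ((π : ℂ) / c ε i) ^ (1/2 : ℂ)) *
          ∑ i, (a i : ℂ) * (e i : ℂ) * (2 * c ε i)⁻¹) with hG
    have hcre : ∀ (ε : ℝ) i, (c ε i).re = ε := by
      intro ε i; simp [hc]
    have hc0 : ∀ i, c 0 i = Complex.I * (lam i : ℂ) / 2 := by
      intro i; simp [hc]
    have hlamc : ∀ i, ((lam i : ℝ) : ℂ) ≠ 0 := by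
      intro i; exact_mod_cast hinv i
    have hcne : ∀ i, c 0 i ≠ 0 := by
      intro i
      rw [hc0]
      simp [Complex.I_ne_zero, hlamc i, div_eq_zero_iff]
    -- change of variables map
    set Φ : (Fin d → ℝ) ≃ᵐ EuclideanSpace ℝ (Fin d) :=
      (MeasurableEquiv.toLp 2 (Fin d → ℝ)).trans b.measurableEquiv.symm with hΦ
    have hMP : MeasurePreserving Φ volume volume :=
      (b.measurePreserving_measurableEquiv.symm).comp
        (EuclideanSpace.volume_preserving_symm_measurableEquiv_toLp (Fin d)).symm
    have hΦval : ∀ y : Fin d → ℝ, Φ y = ∑ i, y i • b i := by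
      intro y
      have h1 : Φ y = b.repr.symm (MeasurableEquiv.toLp 2 (Fin d → ℝ) y) := rfl
      rw [h1, ← b.sum_repr_symm]
      rfl
    have hxv : ∀ y : Fin d → ℝ, (inner ℝ v (Φ y) : ℝ) = ∑ i, a i * y i := by
      intro y
      rw [hΦval, inner_sum]
      refine Finset.sum_congr rfl fun i _ => ?_
      rw [real_inner_smul_right, real_inner_comm, ← OrthonormalBasis.repr_apply_apply]
      simp only [ha]
      ring
    have hxw : ∀ y : Fin d → ℝ, (inner ℝ w (Φ y) : ℝ) = ∑ i, e i * y i := by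
      intro y
      rw [hΦval, inner_sum]
      refine Finset.sum_congr rfl fun i _ => ?_
      rw [real_inner_smul_right, real_inner_comm, ← OrthonormalBasis.repr_apply_apply]
      simp only [he]
      ring
    have hxn : ∀ y : Fin d → ℝ, ‖Φ y‖^2 = ∑ i, y i * y i := by
      intro y
      rw [← real_inner_self_eq_norm_sq, hΦval, b.orthonormal.inner_sum]
      simp
    have hxS : ∀ y : Fin d → ℝ, (inner ℝ (Φ y) (S (Φ y)) : ℝ) = ∑ i, lam i * (y i * y i) := by
      intro y
      rw [hΦval]
      have hS : S (∑ i, y i • b i) = ∑ i, (y i * lam i) • b i := by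
        rw [map_sum]
        refine Finset.sum_congr rfl fun i _ => ?_
        rw [LinearMap.map_smul, hdiag i, smul_smul]
      rw [hS, b.orthonormal.inner_sum]
      simp only [starRingEnd_apply, star_trivial]
      refine Finset.sum_congr rfl fun i _ => ?_
      ring
    -- key evaluation of the integral for positive ε
    have hkey : ∀ ε : ℝ, 0 < ε →
        (∫ x : EuclideanSpace ℝ (Fin d),
          ((inner ℝ v x : ℝ) : ℂ) * ((inner ℝ w x : ℝ) : ℂ) *
            Complex.exp (-((ε * ‖x‖ ^ 2 : ℝ) : ℂ)) *
            ((1 : ℂ) / Zc *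
              Complex.exp (-(Complex.I / 2) * ((inner ℝ x (S x) : ℝ) : ℂ)))) = G ε := by
      intro ε hε
      have hcre' : ∀ i, 0 < (c ε i).re := fun i => by rw [hcre]; exact hε
      have step1 : (∫ x : EuclideanSpace ℝ (Fin d),
          ((inner ℝ v x : ℝ) : ℂ) * ((inner ℝ w x : ℝ) : ℂ) *
            Complex.exp (-((ε * ‖x‖ ^ 2 : ℝ) : ℂ)) *
            ((1 : ℂ) / Zc *
              Complex.exp (-(Complex.I / 2) * ((inner ℝ x (S x) : ℝ) : ℂ))))
          = (1/Zc) * ∫ x : EuclideanSpace ℝ (Fin d),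
              ((inner ℝ v x : ℝ) : ℂ) * ((inner ℝ w x : ℝ) : ℂ) *
              (Complex.exp (-((ε * ‖x‖ ^ 2 : ℝ) : ℂ)) *
                Complex.exp (-(Complex.I / 2) * ((inner ℝ x (S x) : ℝ) : ℂ))) := by
        rw [← integral_const_mul]
        congr 1; ext x; ring
      have step2 : (∫ x : EuclideanSpace ℝ (Fin d),
              ((inner ℝ v x : ℝ) : ℂ) * ((inner ℝ w x : ℝ) : ℂ) *
              (Complex.exp (-((ε * ‖x‖ ^ 2 : ℝ) : ℂ)) *
                Complex.exp (-(Complex.I / 2) * ((inner ℝ x (S x) : ℝ) : ℂ))))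
          = ∫ y : Fin d → ℝ,
              ((inner ℝ v (Φ y) : ℝ) : ℂ) * ((inner ℝ w (Φ y) : ℝ) : ℂ) *
              (Complex.exp (-((ε * ‖Φ y‖ ^ 2 : ℝ) : ℂ)) *
                Complex.exp (-(Complex.I / 2) * ((inner ℝ (Φ y) (S (Φ y)) : ℝ) : ℂ))) :=
        (hMP.integral_comp' _).symm
      have hpoint : ∀ y : Fin d → ℝ,
          ((inner ℝ v (Φ y) : ℝ) : ℂ) * ((inner ℝ w (Φ y) : ℝ) : ℂ) *
            (Complex.exp (-((ε * ‖Φ y‖ ^ 2 : ℝ) : ℂ)) *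
              Complex.exp (-(Complex.I / 2) * ((inner ℝ (Φ y) (S (Φ y)) : ℝ) : ℂ)))
          = (((∑ i, a i * y i : ℝ)) : ℂ) * (((∑ j, e j * y j : ℝ)) : ℂ)
              * ∏ k, Complex.exp (-(c ε k) * ((y k : ℝ):ℂ)^2) := by
        intro y
        rw [hxv, hxw, hxn, hxS]
        congr 1
        rw [← Complex.exp_add, ← Complex.exp_sum]
        congr 1
        push_cast
        rw [Finset.mul_sum, Finset.mul_sum, ← Finset.sum_neg_distrib, ← Finset.sum_add_distrib]
        refine Finset.sum_congr rfl fun k _ => ?_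
        simp only [hc]
        ring
      rw [step1, step2]
      simp only [hpoint]
      rw [moment2 (c ε) hcre' a e]
    -- continuity of G at 0 from the right
    have htend : Tendsto G (𝓝[>] (0:ℝ)) (𝓝 (G 0)) := by
      have h1 : ∀ i, Tendsto (fun ε : ℝ => c ε i) (𝓝[>] (0:ℝ)) (𝓝 (c 0 i)) := by
        intro i
        have hcont : Continuous (fun ε : ℝ => c ε i) := by
          simp only [hc]
          exact Complex.continuous_ofReal.add continuous_const
        exact (hcont.tendsto 0).mono_left nhdsWithin_le_nhds
      have h2 : ∀ i, Tendsto (fun ε : ℝ => ((π:ℂ) / c ε i) ^ (1/2:ℂ)) (𝓝[>] (0:ℝ))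
          (𝓝 (((π:ℂ) / c 0 i) ^ (1/2:ℂ))) := by
        intro i
        have hdiv : Tendsto (fun ε : ℝ => (π:ℂ) / c ε i) (𝓝[>] (0:ℝ)) (𝓝 ((π:ℂ) / c 0 i)) :=
          tendsto_const_nhds.div (h1 i) (hcne i)
        have hslit : (π:ℂ) / c 0 i ∈ Complex.slitPlane := by
          rw [hc0]
          have h0 : (Complex.I * (lam i : ℂ) / 2 : ℂ) ≠ 0 := by
            simp [Complex.I_ne_zero, hlamc i, div_eq_zero_iff]
          have hrepr : (π:ℂ) / (Complex.I * (lam i:ℂ) / 2) = ((-2*π/lam i : ℝ):ℂ) * Complex.I := by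
            rw [div_eq_iff h0]
            push_cast
            rw [show (-2*(π:ℂ)/(lam i:ℂ)) * Complex.I * (Complex.I * (lam i:ℂ)/2)
                = (-2*(π:ℂ)/(lam i:ℂ)) * ((lam i:ℂ)/2) * (Complex.I*Complex.I) by ring,
              Complex.I_mul_I]
            field_simp
            rw [div_self (hlamc i)]
          rw [hrepr]
          apply Complex.mem_slitPlane_iff.mpr
          right
          simp only [Complex.mul_im, Complex.ofReal_re, Complex.I_im, Complex.ofReal_im,
            Complex.I_re, mul_one, mul_zero, add_zero]
          simp [div_eq_zero_iff, Real.pi_ne_zero, hinv i]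
        exact (continuousAt_cpow_const hslit).tendsto.comp hdiv
      have hprod : Tendsto (fun ε : ℝ => ∏ i, ((π:ℂ) / c ε i) ^ (1/2:ℂ)) (𝓝[>] (0:ℝ))
          (𝓝 (∏ i, ((π:ℂ) / c 0 i) ^ (1/2:ℂ))) :=
        tendsto_finset_prod _ (fun i _ => h2 i)
      have hsum : Tendsto (fun ε : ℝ => ∑ i, (a i : ℂ) * (e i : ℂ) * (2 * c ε i)⁻¹)
          (𝓝[>] (0:ℝ)) (𝓝 (∑ i, (a i : ℂ) * (e i : ℂ) * (2 * c 0 i)⁻¹)) := by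
        refine tendsto_finset_sum _ (fun i _ => ?_)
        refine tendsto_const_nhds.mul ?_
        refine Tendsto.inv₀ (tendsto_const_nhds.mul (h1 i)) ?_
        exact mul_ne_zero two_ne_zero (hcne i)
      exact tendsto_const_nhds.mul (hprod.mul hsum)
    -- value of the limit
    have hG0 : G 0 = 1 / Complex.I * ((inner ℝ v (T w) : ℝ) : ℂ) := by
      have hQP : (∏ i, ((π:ℂ) / c 0 i) ^ (1/2:ℂ)) *
          (∏ i, (Complex.exp (Real.pi * Complex.I / 4 * (Real.sign (lam i) : ℝ)) *
            ((|lam i| ^ ((1 : ℝ) / 2) : ℝ) : ℂ)))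
          = (((2 * Real.pi) ^ ((d : ℝ) / 2) : ℝ) : ℂ) := by
        rw [← Finset.prod_mul_distrib]
        have : ∀ i ∈ Finset.univ, ((π:ℂ) / c 0 i) ^ (1/2:ℂ) *
            (Complex.exp (Real.pi * Complex.I / 4 * (Real.sign (lam i) : ℝ)) *
              ((|lam i| ^ ((1 : ℝ) / 2) : ℝ) : ℂ))
            = (((2*π) ^ ((1:ℝ)/2) : ℝ) : ℂ) := by
          intro i _
          rw [hc0 i]
          exact sqrt_factor (hinv i)
        rw [Finset.prod_congr rfl this, Finset.prod_const, Finset.card_univ, Fintype.card_fin,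
          ← Complex.ofReal_pow]
        congr 1
        rw [← Real.rpow_natCast ((2*π) ^ ((1:ℝ)/2)) d, ← Real.rpow_mul (by positivity)]
        congr 1
        ring
      have hRne : (((2 * Real.pi) ^ ((d : ℝ) / 2) : ℝ) : ℂ) ≠ 0 := by
        rw [Complex.ofReal_ne_zero]
        positivity
      have hTb : ∀ i, T (b i) = (lam i)⁻¹ • b i := by
        intro i
        have h1 : T (S (b i)) = b i := by
          have := LinearMap.ext_iff.mp hTS (b i)
          simpa using this
        rw [hdiag i, LinearMap.map_smul] at h1
        exact ((inv_smul_eq_iff₀ (hinv i)).mpr h1.symm).symm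
      have hw : T w = ∑ i, (e i * (lam i)⁻¹) • b i := by
        conv_lhs => rw [← b.sum_repr w]
        rw [map_sum]
        refine Finset.sum_congr rfl fun i _ => ?_
        rw [LinearMap.map_smul, hTb i, smul_smul]
      have hTw : (inner ℝ v (T w) : ℝ) = ∑ i, a i * e i * (lam i)⁻¹ := by
        rw [hw, inner_sum]
        refine Finset.sum_congr rfl fun i _ => ?_
        rw [real_inner_smul_right, real_inner_comm, ← OrthonormalBasis.repr_apply_apply]
        simp only [ha]
        ring
      have hmain : (∏ i, (Complex.exp (Real.pi * Complex.I / 4 * (Real.sign (lam i) : ℝ)) *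
            ((|lam i| ^ ((1 : ℝ) / 2) : ℝ) : ℂ))) *
          ((∏ i, ((π:ℂ) / c 0 i) ^ (1/2:ℂ)) *
            (∑ i, (a i : ℂ) * (e i : ℂ) * (2 * c 0 i)⁻¹))
          = (((2 * Real.pi) ^ ((d : ℝ) / 2) : ℝ) : ℂ) *
            (∑ i, (a i : ℂ) * (e i : ℂ) * (2 * c 0 i)⁻¹) := by
        rw [← hQP]; ring
      simp only [hG]
      rw [hZc, one_div_div, div_mul_eq_mul_div, hmain, mul_comm _ (∑ i, (a i : ℂ) * (e i : ℂ) * (2 * c 0 i)⁻¹),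
        mul_div_assoc, div_self hRne, mul_one]
      rw [hTw]
      push_cast
      rw [Finset.mul_sum]
      refine Finset.sum_congr rfl fun i _ => ?_
      rw [hc0 i, show (2:ℂ) * (Complex.I * (lam i:ℂ)/2) = Complex.I * (lam i:ℂ) by ring,
        mul_inv, one_div]
      ring
    refine Tendsto.congr' ?_ (hG0 ▸ htend)
    filter_upwards [self_mem_nhdsWithin] with ε hε
    exact (hkey ε hε).symm
end

section
/- Let V = V₁ ⊕ V₂ be an orthogonal decomposition of a finite-dimensional real inner product space, M: V₁ → V₂ a linear isomorphism, and for x ∈ V write x = x₁ + x₂ with x_j ∈ V_j. Let f: V₁ → ℂ be bounded and continuous and fix v ∈ V₂. Then lim_{ε→0⁺} (1/Z) ∫_V f(x₁) e^{i⟨x₂,v⟩} e^{−ε‖x‖²} e^{i⟨x₂, M x₁⟩} dx = f(−M⁻¹v), where Z = (2π)^{dim V₂} / |det(Mψ)| for any fixed isometry ψ: V₂ → V₁ (the value |det(Mψ)| is independent of the choice of ψ). -/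
open MeasureTheory Filter Topology
open Real Complex

local notation "E" n => EuclideanSpace ℝ (Fin n)

-- real Gaussian integrable
lemma gauss_integrable (n : ℕ) {b : ℝ} (hb : 0 < b) :
    Integrable (fun x : E n => Real.exp (-(b * ‖x‖ ^ 2))) := by
  have h := (GaussianFourier.integrable_cexp_neg_mul_sq_norm_add (V := E n)
    (b := (b : ℂ)) (by simpa using hb) 0 0).norm
  refine h.congr (Filter.Eventually.of_forall fun x => ?_)
  simp [Complex.norm_exp]
  left
  norm_cast

-- change of variables under a linear equivalence
lemma integral_comp_linear (n : ℕ) (L : (E n) ≃ₗ[ℝ] E n) (g : (E n) → ℂ) :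
    ∫ x, g (L x) = |LinearMap.det (L : (E n) →ₗ[ℝ] E n)|⁻¹ • ∫ y, g y := by
  have hdet : LinearMap.det (L : (E n) →ₗ[ℝ] E n) ≠ 0 := L.isUnit_det'.ne_zero
  let e : (E n) ≃ᵐ E n := L.toContinuousLinearEquiv.toHomeomorph.toMeasurableEquiv
  have h1 : ∫ x, g (L x) = ∫ y, g y ∂(Measure.map e volume) :=
    (MeasureTheory.integral_map_equiv e g).symm
  have h2 : Measure.map e volume
      = ENNReal.ofReal |(LinearMap.det (L : (E n) →ₗ[ℝ] E n))⁻¹| • volume := by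
    have : (e : (E n) → E n) = (L : (E n) →ₗ[ℝ] E n) := rfl
    rw [this, Measure.map_linearMap_addHaar_eq_smul_addHaar volume hdet]
  rw [h1, h2, integral_smul_measure, ENNReal.toReal_ofReal (abs_nonneg _), abs_inv]

lemma stepA (n : ℕ) (M : (E n) ≃ₗ[ℝ] E n) (f : (E n) → ℂ) (hf : Continuous f)
    (C : ℝ) (hC : ∀ x, ‖f x‖ ≤ C) (v : E n) {ε : ℝ} (hε : 0 < ε) :
    (∫ p : (E n) × E n,
        f p.1 * Complex.exp (Complex.I * ((inner ℝ p.2 v : ℝ) : ℂ)) *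
          Complex.exp (-((ε * (‖p.1‖ ^ 2 + ‖p.2‖ ^ 2) : ℝ) : ℂ)) *
          Complex.exp (Complex.I * ((inner ℝ p.2 (M p.1) : ℝ) : ℂ)))
      = ((π : ℂ) / (ε : ℂ)) ^ ((n : ℂ) / 2) *
        ∫ x, f x * Complex.exp (-((ε * ‖x‖ ^ 2 : ℝ) : ℂ)) *
          Complex.exp (-((‖v + M x‖ ^ 2 / (4 * ε) : ℝ) : ℂ)) := by
  have hMc : Continuous fun x : E n => M x := M.toContinuousLinearEquiv.continuous
  have hpt : ∀ (x y : E n),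
      f x * Complex.exp (Complex.I * ((inner ℝ y v : ℝ) : ℂ)) *
        Complex.exp (-((ε * (‖x‖ ^ 2 + ‖y‖ ^ 2) : ℝ) : ℂ)) *
        Complex.exp (Complex.I * ((inner ℝ y (M x) : ℝ) : ℂ))
      = (f x * Complex.exp (-((ε * ‖x‖ ^ 2 : ℝ) : ℂ))) *
        Complex.exp (-(ε : ℂ) * (‖y‖ : ℂ) ^ 2 + Complex.I * ((inner ℝ (v + M x) y : ℝ) : ℂ)) := by
    intro x y
    have hinn : (inner ℝ (v + M x) y : ℝ) = (inner ℝ y v : ℝ) + (inner ℝ y (M x) : ℝ) := by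
      rw [inner_add_left, real_inner_comm v y, real_inner_comm (M x) y]
    rw [mul_assoc, mul_assoc, ← Complex.exp_add, ← Complex.exp_add, mul_assoc,
      ← Complex.exp_add]
    rw [mul_comm (f x) (Complex.exp _), mul_comm (f x) (Complex.exp _)]
    congr 2
    rw [hinn]
    push_cast
    ring
  have hbound : Integrable (fun p : (E n) × E n =>
      (C * Real.exp (-(ε * ‖p.1‖ ^ 2))) * Real.exp (-(ε * ‖p.2‖ ^ 2)))
      (volume.prod volume) :=
    ((gauss_integrable n hε).const_mul C).mul_prod (gauss_integrable n hε)
  have hd : Continuous (fun p : (E n) × E n =>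
      f p.1 * Complex.exp (Complex.I * ((inner ℝ p.2 v : ℝ) : ℂ)) *
        Complex.exp (-((ε * (‖p.1‖ ^ 2 + ‖p.2‖ ^ 2) : ℝ) : ℂ)) *
        Complex.exp (Complex.I * ((inner ℝ p.2 (M p.1) : ℝ) : ℂ))) := by
    have h1 : Continuous fun p : (E n) × E n => (inner ℝ p.2 v : ℝ) :=
      continuous_snd.inner continuous_const
    have h2 : Continuous fun p : (E n) × E n => (inner ℝ p.2 (M p.1) : ℝ) :=
      continuous_snd.inner (hMc.comp continuous_fst)
    have e1 : Continuous fun p : (E n) × E n =>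
        Complex.exp (Complex.I * ((inner ℝ p.2 v : ℝ) : ℂ)) :=
      Complex.continuous_exp.comp (continuous_const.mul (Complex.continuous_ofReal.comp h1))
    have e2 : Continuous fun p : (E n) × E n =>
        Complex.exp (-((ε * (‖p.1‖ ^ 2 + ‖p.2‖ ^ 2) : ℝ) : ℂ)) := by
      have hc : Continuous fun p : (E n) × E n => (ε * (‖p.1‖ ^ 2 + ‖p.2‖ ^ 2) : ℝ) := by
        fun_prop
      exact Complex.continuous_exp.comp (Complex.continuous_ofReal.comp hc).neg
    have e3 : Continuous fun p : (E n) × E n =>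
        Complex.exp (Complex.I * ((inner ℝ p.2 (M p.1) : ℝ) : ℂ)) :=
      Complex.continuous_exp.comp (continuous_const.mul (Complex.continuous_ofReal.comp h2))
    exact (((hf.comp continuous_fst).mul e1).mul e2).mul e3
  have hInt : Integrable (fun p : (E n) × E n =>
      f p.1 * Complex.exp (Complex.I * ((inner ℝ p.2 v : ℝ) : ℂ)) *
        Complex.exp (-((ε * (‖p.1‖ ^ 2 + ‖p.2‖ ^ 2) : ℝ) : ℂ)) *
        Complex.exp (Complex.I * ((inner ℝ p.2 (M p.1) : ℝ) : ℂ))) (volume.prod volume) := by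
    refine Integrable.mono' hbound ?_ ?_
    · rw [← MeasureTheory.Measure.volume_eq_prod]
      exact hd.aestronglyMeasurable
    · filter_upwards with p
      have hnorm : ‖f p.1 * Complex.exp (Complex.I * ((inner ℝ p.2 v : ℝ) : ℂ)) *
          Complex.exp (-((ε * (‖p.1‖ ^ 2 + ‖p.2‖ ^ 2) : ℝ) : ℂ)) *
          Complex.exp (Complex.I * ((inner ℝ p.2 (M p.1) : ℝ) : ℂ))‖
          = ‖f p.1‖ * Real.exp (-(ε * (‖p.1‖ ^ 2 + ‖p.2‖ ^ 2))) := by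
        simp [Complex.norm_exp, Complex.mul_re]
        left; left; norm_cast
      rw [hnorm]
      have h1 : Real.exp (-(ε * (‖p.1‖ ^ 2 + ‖p.2‖ ^ 2))) =
          Real.exp (-(ε * ‖p.1‖ ^ 2)) * Real.exp (-(ε * ‖p.2‖ ^ 2)) := by
        rw [← Real.exp_add]; ring_nf
      rw [h1, ← mul_assoc]
      gcongr
      exact hC p.1
  have hGauss : ∀ x : E n, (∫ y : E n, Complex.exp (-(ε : ℂ) * (‖y‖ : ℂ) ^ 2
      + Complex.I * ((inner ℝ (v + M x) y : ℝ) : ℂ)))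
      = ((π : ℂ) / (ε : ℂ)) ^ ((n : ℂ) / 2) *
        Complex.exp (-((‖v + M x‖ ^ 2 / (4 * ε) : ℝ) : ℂ)) := by
    intro x
    rw [GaussianFourier.integral_cexp_neg_mul_sq_norm_add (by simpa using hε)
      Complex.I (v + M x), finrank_euclideanSpace_fin]
    congr 1
    rw [Complex.I_sq]
    push_cast
    ring
  rw [MeasureTheory.Measure.volume_eq_prod, MeasureTheory.integral_prod _ hInt]
  simp_rw [hpt, integral_const_mul, hGauss]
  rw [← integral_const_mul]
  refine integral_congr_ae (Filter.Eventually.of_forall fun x => ?_)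
  ring

lemma stepB (n : ℕ) (M : (E n) ≃ₗ[ℝ] E n) (f : (E n) → ℂ) (v : E n) {ε : ℝ} (hε : 0 < ε) :
    (∫ x, f x * Complex.exp (-((ε * ‖x‖ ^ 2 : ℝ) : ℂ)) *
        Complex.exp (-((‖v + M x‖ ^ 2 / (4 * ε) : ℝ) : ℂ)))
    = (|LinearMap.det (M : (E n) →ₗ[ℝ] E n)|⁻¹ * (2 * Real.sqrt ε) ^ n) •
      ∫ z : E n, f (M.symm ((2 * Real.sqrt ε) • z - v)) *
        Complex.exp (-((ε * ‖M.symm ((2 * Real.sqrt ε) • z - v)‖ ^ 2 : ℝ) : ℂ)) *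
        Complex.exp (-((‖z‖ ^ 2 : ℝ) : ℂ)) := by
  set G : (E n) → ℂ := fun u => f (M.symm u) *
    Complex.exp (-((ε * ‖M.symm u‖ ^ 2 : ℝ) : ℂ)) *
    Complex.exp (-((‖v + u‖ ^ 2 / (4 * ε) : ℝ) : ℂ)) with hG
  have h1 : (∫ x, f x * Complex.exp (-((ε * ‖x‖ ^ 2 : ℝ) : ℂ)) *
      Complex.exp (-((‖v + M x‖ ^ 2 / (4 * ε) : ℝ) : ℂ))) = ∫ x, G (M x) := by
    refine integral_congr_ae (Filter.Eventually.of_forall fun x => ?_)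
    simp [hG]
  have hs : (0:ℝ) < 2 * Real.sqrt ε := by positivity
  have h3 : ∫ z : E n, G ((2 * Real.sqrt ε) • z - v)
      = |((2 * Real.sqrt ε) ^ n)⁻¹| • ∫ y, G (y - v) := by
    have h := MeasureTheory.Measure.integral_comp_smul (volume : Measure (E n))
      (fun y => G (y - v)) (2 * Real.sqrt ε)
    rw [finrank_euclideanSpace_fin] at h
    simpa [smul_sub] using h
  have h4 : ∫ y, G (y - v) = ((2 * Real.sqrt ε) ^ n) • ∫ z : E n,
      G ((2 * Real.sqrt ε) • z - v) := by
    rw [h3, smul_smul, _root_.abs_of_nonneg (by positivity), mul_inv_cancel₀ (by positivity), one_smul]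
  have hz : ∀ z : E n, G ((2 * Real.sqrt ε) • z - v)
      = f (M.symm ((2 * Real.sqrt ε) • z - v)) *
        Complex.exp (-((ε * ‖M.symm ((2 * Real.sqrt ε) • z - v)‖ ^ 2 : ℝ) : ℂ)) *
        Complex.exp (-((‖z‖ ^ 2 : ℝ) : ℂ)) := by
    intro z
    have harg : ‖v + ((2 * Real.sqrt ε) • z - v)‖ ^ 2 / (4 * ε) = ‖z‖ ^ 2 := by
      have hv : v + ((2 * Real.sqrt ε) • z - v) = (2 * Real.sqrt ε) • z := by abel
      rw [hv, norm_smul, Real.norm_eq_abs, _root_.abs_of_nonneg (by positivity), mul_pow, mul_pow,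
        Real.sq_sqrt hε.le]
      field_simp
      ring
    simp only [hG, harg]
  rw [h1, integral_comp_linear n M G, (integral_sub_right_eq_self G v).symm, h4]
  simp_rw [hz]
  rw [smul_smul]

lemma scalar_real (n : ℕ) {D ε : ℝ} (hD : 0 < D) (hε : 0 < ε) :
    D / (2 * π) ^ (n : ℝ) * ((π / ε) ^ ((n:ℝ)/2) * (D⁻¹ * (2 * Real.sqrt ε) ^ n))
      = (π ^ ((n:ℝ)/2))⁻¹ := by
  have hπ := Real.pi_pos
  have e1 : (2 * Real.sqrt ε) ^ n = 2 ^ (n:ℝ) * ε ^ ((n:ℝ)/2) := by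
    rw [mul_pow, ← Real.rpow_natCast 2 n, ← Real.rpow_natCast (Real.sqrt ε) n,
      Real.sqrt_eq_rpow, ← Real.rpow_mul hε.le]
    congr 1
    ring
  have e2 : (2 * π) ^ (n:ℝ) = 2 ^ (n:ℝ) * π ^ (n:ℝ) := Real.mul_rpow (by norm_num) hπ.le
  have e3 : (π/ε) ^ ((n:ℝ)/2) = π ^ ((n:ℝ)/2) / ε ^ ((n:ℝ)/2) := Real.div_rpow hπ.le hε.le _
  have e4 : π ^ (n:ℝ) = π ^ ((n:ℝ)/2) * π ^ ((n:ℝ)/2) := by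
    rw [← Real.rpow_add hπ]; ring_nf
  rw [e1, e2, e3, e4]
  have h2 : (0:ℝ) < 2 ^ (n:ℝ) := by positivity
  have hε2 : (0:ℝ) < ε ^ ((n:ℝ)/2) := by positivity
  have hπ2 : (0:ℝ) < π ^ ((n:ℝ)/2) := by positivity
  field_simp

lemma gauss_value (n : ℕ) :
    (∫ z : E n, Complex.exp (-((‖z‖ ^ 2 : ℝ) : ℂ)))
      = ((π ^ ((n:ℝ)/2) : ℝ) : ℂ) := by
  have h := GaussianFourier.integral_cexp_neg_mul_sq_norm (V := E n) (b := 1) (by norm_num)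
  rw [finrank_euclideanSpace_fin] at h
  have h2 : (∫ z : E n, Complex.exp (-((‖z‖ ^ 2 : ℝ) : ℂ)))
      = ∫ z : E n, Complex.exp (-1 * (‖z‖ : ℂ) ^ 2) := by
    refine integral_congr_ae (Filter.Eventually.of_forall fun z => ?_)
    simp only [Complex.ofReal_pow, neg_mul, one_mul]
  rw [h2, h, Complex.ofReal_cpow Real.pi_pos.le]
  push_cast
  norm_num

set_option maxHeartbeats 1000000 in
lemma stepC (n : ℕ) (M : (E n) ≃ₗ[ℝ] E n) (f : (E n) → ℂ) (hf : Continuous f)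
    (C : ℝ) (hC : ∀ x, ‖f x‖ ≤ C) (v : E n) :
    Tendsto (fun ε : ℝ => ∫ z : E n, f (M.symm ((2 * Real.sqrt ε) • z - v)) *
        Complex.exp (-((ε * ‖M.symm ((2 * Real.sqrt ε) • z - v)‖ ^ 2 : ℝ) : ℂ)) *
        Complex.exp (-((‖z‖ ^ 2 : ℝ) : ℂ)))
      (𝓝[>] (0:ℝ)) (𝓝 (f (-(M.symm v)) * ((π ^ ((n:ℝ)/2) : ℝ) : ℂ))) := by
  have hMs : Continuous fun u : E n => M.symm u := M.symm.toContinuousLinearEquiv.continuous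
  have hint : ∫ z : E n, f (-(M.symm v)) * Complex.exp (-((‖z‖ ^ 2 : ℝ) : ℂ))
      = f (-(M.symm v)) * ((π ^ ((n:ℝ)/2) : ℝ) : ℂ) := by
    rw [integral_const_mul, gauss_value n]
  rw [← hint]
  refine MeasureTheory.tendsto_integral_filter_of_dominated_convergence
    (fun z => C * Real.exp (-(1 * ‖z‖ ^ 2))) ?_ ?_ ?_ ?_
  · filter_upwards with ε
    have c1 : Continuous fun z : E n => M.symm ((2 * Real.sqrt ε) • z - v) :=
      hMs.comp ((continuous_id.const_smul (2 * Real.sqrt ε)).sub continuous_const)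
    exact (((hf.comp c1).mul (Complex.continuous_exp.comp
      (Complex.continuous_ofReal.comp
        (continuous_const.mul ((c1.norm).pow 2))).neg)).mul
      (Complex.continuous_exp.comp
        (Complex.continuous_ofReal.comp (continuous_norm.pow 2)).neg)
      ).aestronglyMeasurable
  · filter_upwards [eventually_mem_nhdsWithin] with ε (hε : ε ∈ Set.Ioi (0:ℝ))
    filter_upwards with z
    have h1 : ‖f (M.symm ((2 * Real.sqrt ε) • z - v)) *
        Complex.exp (-((ε * ‖M.symm ((2 * Real.sqrt ε) • z - v)‖ ^ 2 : ℝ) : ℂ)) *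
        Complex.exp (-((‖z‖ ^ 2 : ℝ) : ℂ))‖
        = ‖f (M.symm ((2 * Real.sqrt ε) • z - v))‖ *
          Real.exp (-(ε * ‖M.symm ((2 * Real.sqrt ε) • z - v)‖ ^ 2)) *
          Real.exp (-(‖z‖ ^ 2)) := by
      simp [Complex.norm_exp]
      norm_cast
    rw [h1]
    have h2 : Real.exp (-(ε * ‖M.symm ((2 * Real.sqrt ε) • z - v)‖ ^ 2)) ≤ 1 := by
      rw [Real.exp_le_one_iff]
      have : (0:ℝ) < ε := hε
      nlinarith [sq_nonneg ‖M.symm ((2 * Real.sqrt ε) • z - v)‖]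
    calc ‖f (M.symm ((2 * Real.sqrt ε) • z - v))‖ *
          Real.exp (-(ε * ‖M.symm ((2 * Real.sqrt ε) • z - v)‖ ^ 2)) * Real.exp (-(‖z‖ ^ 2))
        ≤ C * 1 * Real.exp (-(‖z‖ ^ 2)) := by
          have hC0 : (0:ℝ) ≤ C := (norm_nonneg (f 0)).trans (hC 0)
          gcongr <;> first | exact hC _ | exact h2 | positivity
      _ = C * Real.exp (-(1 * ‖z‖ ^ 2)) := by rw [mul_one, one_mul]
  · exact (gauss_integrable n one_pos).const_mul C
  · filter_upwards with z
    have c1 : Continuous fun ε : ℝ => M.symm ((2 * Real.sqrt ε) • z - v) :=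
      hMs.comp ((((continuous_const.mul Real.continuous_sqrt)).smul
        continuous_const).sub continuous_const)
    have c3 : Continuous fun ε : ℝ =>
        (ε * ‖M.symm ((2 * Real.sqrt ε) • z - v)‖ ^ 2 : ℝ) :=
      continuous_id.mul ((c1.norm).pow 2)
    have cw : Continuous fun ε : ℝ => f (M.symm ((2 * Real.sqrt ε) • z - v)) *
        Complex.exp (-((ε * ‖M.symm ((2 * Real.sqrt ε) • z - v)‖ ^ 2 : ℝ) : ℂ)) *
        Complex.exp (-((‖z‖ ^ 2 : ℝ) : ℂ)) :=
      ((hf.comp c1).mul (Complex.continuous_exp.comp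
        ((Complex.continuous_ofReal.comp c3).neg))).mul continuous_const
    have h0 : Tendsto (fun ε : ℝ => f (M.symm ((2 * Real.sqrt ε) • z - v)) *
        Complex.exp (-((ε * ‖M.symm ((2 * Real.sqrt ε) • z - v)‖ ^ 2 : ℝ) : ℂ)) *
        Complex.exp (-((‖z‖ ^ 2 : ℝ) : ℂ)))
        (𝓝[>] (0:ℝ))
        (𝓝 (f (M.symm ((2 * Real.sqrt 0) • z - v)) *
          Complex.exp (-((0 * ‖M.symm ((2 * Real.sqrt 0) • z - v)‖ ^ 2 : ℝ) : ℂ)) *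
          Complex.exp (-((‖z‖ ^ 2 : ℝ) : ℂ)))) :=
      (cw.tendsto 0).mono_left nhdsWithin_le_nhds
    convert h0 using 2 <;> simp

/-- Proposition 3.4: with `V = V₁ ⊕ V₂` (both identified with `ℝⁿ` by an isometry),
`M : V₁ → V₂` a linear isomorphism, `f` bounded continuous on `V₁` and `v ∈ V₂`:
`lim_{ε→0⁺} (1/Z) ∫_V f(x₁) e^{i⟨x₂,v⟩} e^{−ε‖x‖²} e^{i⟨x₂,Mx₁⟩} dx = f(−M⁻¹v)`,
where `Z = (2π)^{dim V₂}/|det M|`. -/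
theorem stmt_7 (n : ℕ)
    (M : EuclideanSpace ℝ (Fin n) ≃ₗ[ℝ] EuclideanSpace ℝ (Fin n))
    (f : EuclideanSpace ℝ (Fin n) → ℂ) (hf : Continuous f)
    (C : ℝ) (hC : ∀ x, ‖f x‖ ≤ C) (v : EuclideanSpace ℝ (Fin n)) :
    Tendsto (fun ε : ℝ =>
        ((|LinearMap.det (M : EuclideanSpace ℝ (Fin n) →ₗ[ℝ] EuclideanSpace ℝ (Fin n))| /
            (2 * Real.pi) ^ (n : ℝ) : ℝ) : ℂ) *
          ∫ p : EuclideanSpace ℝ (Fin n) × EuclideanSpace ℝ (Fin n),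
            f p.1 * Complex.exp (Complex.I * ((inner ℝ p.2 v : ℝ) : ℂ)) *
              Complex.exp (-((ε * (‖p.1‖ ^ 2 + ‖p.2‖ ^ 2) : ℝ) : ℂ)) *
              Complex.exp (Complex.I * ((inner ℝ p.2 (M p.1) : ℝ) : ℂ)))
      (𝓝[>] (0 : ℝ)) (𝓝 (f (-(M.symm v)))) := by
  have hMdet : LinearMap.det (M : (E n) →ₗ[ℝ] E n) ≠ 0 := M.isUnit_det'.ne_zero
  have hD : (0:ℝ) < |LinearMap.det (M : (E n) →ₗ[ℝ] E n)| := abs_pos.mpr hMdet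
  have hπ2 : (0:ℝ) < π ^ ((n:ℝ)/2) := Real.rpow_pos_of_pos Real.pi_pos _
  have hval : ((π ^ ((n:ℝ)/2) : ℝ))⁻¹ • (f (-(M.symm v)) * ((π ^ ((n:ℝ)/2) : ℝ) : ℂ))
      = f (-(M.symm v)) := by
    rw [Complex.real_smul, Complex.ofReal_inv]
    have : ((π ^ ((n:ℝ)/2) : ℝ) : ℂ) ≠ 0 := by
      simpa using hπ2.ne'
    field_simp
  have hfinal : Tendsto (fun ε : ℝ => ((π ^ ((n:ℝ)/2) : ℝ))⁻¹ •
      ∫ z : E n, f (M.symm ((2 * Real.sqrt ε) • z - v)) *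
        Complex.exp (-((ε * ‖M.symm ((2 * Real.sqrt ε) • z - v)‖ ^ 2 : ℝ) : ℂ)) *
        Complex.exp (-((‖z‖ ^ 2 : ℝ) : ℂ)))
      (𝓝[>] (0:ℝ)) (𝓝 (f (-(M.symm v)))) := by
    have h := (stepC n M f hf C hC v).const_smul (((π ^ ((n:ℝ)/2) : ℝ))⁻¹)
    rwa [hval] at h
  refine Tendsto.congr' ?_ hfinal
  filter_upwards [eventually_mem_nhdsWithin] with ε (hε' : ε ∈ Set.Ioi (0:ℝ))
  have hε : (0:ℝ) < ε := hε'
  rw [stepA n M f hf C hC v hε, stepB n M f v hε]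
  have hcpow : ((π:ℂ)/(ε:ℂ)) ^ ((n:ℂ)/2) = (((π/ε) ^ ((n:ℝ)/2) : ℝ) : ℂ) := by
    rw [Complex.ofReal_cpow (by positivity)]
    push_cast
    ring_nf
  rw [hcpow, Complex.real_smul, Complex.real_smul, ← scalar_real n hD hε]
  push_cast
  ring
end

section
/- Let V₀ be a finite-dimensional real inner product space, Γ ⊂ V₀ a full-rank lattice, and f: V₀ → ℂ a continuous Γ-periodic function. Then lim_{ε→0⁺} (ε/π)^{d₀/2} ∫_{V₀} e^{−ε‖x‖²} f(x) dx exists and equals (1/vol(Q)) ∫_Q f(x) dx, where d₀ = dim V₀, Q is a fundamental parallelepiped {Σᵢ xᵢeᵢ : 0 ≤ xᵢ ≤ 1} for a basis (eᵢ) of Γ, and vol(Q) is its Lebesgue volume. -/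
open MeasureTheory Filter Topology Set Complex

set_option maxHeartbeats 1000000

noncomputable section Stmt8Aux

namespace Stmt8


variable {d : ℕ}

local instance : Fact ((0:ℝ) < 1) := ⟨one_pos⟩

abbrev Xd (d : ℕ) := Fin d → AddCircle (1:ℝ)

def piq (d : ℕ) : (Fin d → ℝ) → Xd d := fun u j => (u j : AddCircle (1:ℝ))

variable (b : Module.Basis (Fin d) ℝ (EuclideanSpace ℝ (Fin d)))

def qm : EuclideanSpace ℝ (Fin d) → Xd d := fun x => piq d (b.equivFun x)

lemma qm_symm (u : Fin d → ℝ) : qm b (b.equivFun.symm u) = piq d u := by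
  unfold qm
  rw [LinearEquiv.apply_symm_apply]

lemma piq_oqm : IsOpenQuotientMap (piq d) :=
  IsOpenQuotientMap.piMap fun _ => QuotientAddGroup.isOpenQuotientMap_mk

lemma qm_oqm : IsOpenQuotientMap (qm b) := by
  have h1 : IsOpenQuotientMap (⇑(b.equivFunL)) :=
    ⟨b.equivFunL.surjective, b.equivFunL.continuous, b.equivFunL.toHomeomorph.isOpenMap⟩
  exact (piq_oqm).comp h1

lemma qm_continuous : Continuous (qm b) := (qm_oqm b).continuous

lemma coe_equivIco (y : AddCircle (1:ℝ)) :
    (((AddCircle.equivIco 1 0 y) : ℝ) : AddCircle (1:ℝ)) = y := by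
  exact (AddCircle.equivIco 1 0).symm_apply_apply y

/-- representative map -/
def rep : Xd d → EuclideanSpace ℝ (Fin d) :=
  fun v => b.equivFun.symm (fun j => ((AddCircle.equivIco 1 0 (v j)) : ℝ))
variable {f : EuclideanSpace ℝ (Fin d) → ℂ}

lemma f_inv (hper : ∀ (i : Fin d) (x), f (x + b i) = f x) :
    ∀ (n : Fin d → ℤ) (x), f (x + ∑ j, (n j : ℝ) • b j) = f x := by
  have h1 : ∀ (i : Fin d) (k : ℤ) (x), f (x + (k : ℝ) • b i) = f x := by
    intro i k
    induction k using Int.induction_on with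
    | zero => simp
    | succ k ih =>
        intro x
        have hc : (((k : ℤ) + 1 : ℤ) : ℝ) = ((k : ℤ) : ℝ) + 1 := by push_cast; ring
        have e : x + (((k : ℤ) + 1 : ℤ) : ℝ) • b i = (x + ((k : ℤ) : ℝ) • b i) + b i := by
          rw [hc, add_smul, one_smul, add_assoc]
        rw [e, hper]
        exact ih x
    | pred k ih =>
        intro x
        have hc : ((-(k : ℤ) : ℤ) : ℝ) = ((-(k : ℤ) - 1 : ℤ) : ℝ) + 1 := by push_cast; ring
        have e : (x + ((-(k : ℤ) - 1 : ℤ) : ℝ) • b i) + b i = x + ((-(k : ℤ) : ℤ) : ℝ) • b i := by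
          rw [hc, add_smul, one_smul, ← add_assoc]
        calc f (x + ((-(k : ℤ) - 1 : ℤ) : ℝ) • b i)
            = f ((x + ((-(k : ℤ) - 1 : ℤ) : ℝ) • b i) + b i) := (hper i _).symm
          _ = f (x + ((-(k : ℤ) : ℤ) : ℝ) • b i) := by rw [e]
          _ = f x := ih x
  suffices H : ∀ (s : Finset (Fin d)) (n : Fin d → ℤ) (x),
      f (x + ∑ j ∈ s, (n j : ℝ) • b j) = f x by
    intro n x; exact H Finset.univ n x
  intro s
  induction s using Finset.induction_on with
  | empty => simp
  | @insert j s hj ih =>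
      intro n x
      rw [Finset.sum_insert hj, ← add_assoc]
      rw [ih n (x + (n j : ℝ) • b j)]
      exact h1 j (n j) x

lemma rep_qm (hper : ∀ (i : Fin d) (x), f (x + b i) = f x) (x : EuclideanSpace ℝ (Fin d)) :
    f (rep b (qm b x)) = f x := by
  set u := b.equivFun x with hu
  have key : ∀ j : Fin d, ∃ k : ℤ,
      ((AddCircle.equivIco 1 0 ((u j : AddCircle (1:ℝ)))) : ℝ) = u j + (k : ℝ) := by
    intro j
    set c := ((AddCircle.equivIco 1 0 ((u j : AddCircle (1:ℝ)))) : ℝ) with hc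
    have hcoe : (c : AddCircle (1:ℝ)) = (u j : AddCircle (1:ℝ)) :=
      (AddCircle.equivIco 1 0).symm_apply_apply _
    have hmem : (c - u j : ℝ) ∈ AddSubgroup.zmultiples (1:ℝ) := by
      rwa [QuotientAddGroup.eq_iff_sub_mem] at hcoe
    obtain ⟨k, hk⟩ := hmem
    have h2 : c - u j = (k : ℝ) := by rw [← hk]; simp
    exact ⟨k, by linarith⟩
  choose k hk using key
  have hrep : rep b (qm b x) = x + ∑ j, (k j : ℝ) • b j := by
    unfold rep qm piq
    have : (fun j => ((AddCircle.equivIco 1 0 ((b.equivFun x j : ℝ) : AddCircle (1:ℝ))) : ℝ))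
        = u + fun j => (k j : ℝ) := by
      funext j; exact hk j
    rw [this, map_add, hu, LinearEquiv.symm_apply_apply]
    congr 1
    simp [Module.Basis.equivFun_symm_apply]
  rw [hrep, f_inv b hper]
/-- character indexed by `n` -/
def En (d : ℕ) (n : Fin d → ℤ) : C(Xd d, ℂ) :=
  ⟨fun u => ∏ j, fourier (n j) (u j), by
    apply continuous_finset_prod
    intro j _
    exact (map_continuous (fourier (n j))).comp (continuous_apply j)⟩

lemma En_apply (n : Fin d → ℤ) (u : Xd d) : En d n u = ∏ j, fourier (n j) (u j) := rfl

lemma En_zero : En d 0 = 1 := by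
  ext u; simp [En_apply, fourier_zero]

lemma En_mul (n m : Fin d → ℤ) : En d n * En d m = En d (n + m) := by
  ext u
  simp only [ContinuousMap.mul_apply, En_apply, Pi.add_apply, fourier_add]
  rw [← Finset.prod_mul_distrib]

lemma En_star (n : Fin d → ℤ) : star (En d n) = En d (-n) := by
  ext u
  simp only [ContinuousMap.star_apply, En_apply, Pi.neg_apply, fourier_neg]
  rw [← map_prod]
  rfl

/-- span of characters -/
def spanE (d : ℕ) : Submodule ℂ C(Xd d, ℂ) := Submodule.span ℂ (Set.range (En d))

lemma mul_mem_spanE {F G : C(Xd d, ℂ)} (hF : F ∈ spanE d) (hG : G ∈ spanE d) :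
    F * G ∈ spanE d := by
  induction hF using Submodule.span_induction with
  | mem x hx =>
      obtain ⟨n, rfl⟩ := hx
      induction hG using Submodule.span_induction with
      | mem y hy =>
          obtain ⟨m, rfl⟩ := hy
          rw [En_mul]
          exact Submodule.subset_span ⟨n + m, rfl⟩
      | zero => rw [mul_zero]; exact (spanE d).zero_mem
      | add y z _ _ hy hz => rw [mul_add]; exact (spanE d).add_mem hy hz
      | smul c y _ hy => rw [mul_smul_comm]; exact (spanE d).smul_mem c hy
  | zero => rw [zero_mul]; exact (spanE d).zero_mem
  | add x y _ _ hx hy => rw [add_mul]; exact (spanE d).add_mem hx hy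
  | smul c x _ hx => rw [smul_mul_assoc]; exact (spanE d).smul_mem c hx

lemma star_mem_spanE {F : C(Xd d, ℂ)} (hF : F ∈ spanE d) : star F ∈ spanE d := by
  induction hF using Submodule.span_induction with
  | mem x hx =>
      obtain ⟨n, rfl⟩ := hx
      rw [En_star]
      exact Submodule.subset_span ⟨-n, rfl⟩
  | zero => rw [star_zero]; exact (spanE d).zero_mem
  | add x y _ _ hx hy => rw [star_add]; exact (spanE d).add_mem hx hy
  | smul c x _ hx => rw [star_smul]; exact (spanE d).smul_mem _ hx

/-- characters as a star subalgebra -/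
def algE (d : ℕ) : StarSubalgebra ℂ C(Xd d, ℂ) where
  toSubalgebra := (spanE d).toSubalgebra
    (by rw [← En_zero (d := d)]; exact Submodule.subset_span ⟨0, rfl⟩)
    (fun _ _ hx hy => mul_mem_spanE hx hy)
  star_mem' := star_mem_spanE

lemma mem_algE_iff {F : C(Xd d, ℂ)} : F ∈ algE d ↔ F ∈ spanE d := Iff.rfl

lemma algE_separates : (algE d).SeparatesPoints := by
  intro u v huv
  obtain ⟨j, hj⟩ : ∃ j, u j ≠ v j := by
    by_contra h
    push_neg at h
    exact huv (funext h)
  refine ⟨_, ⟨En d (Pi.single j 1), Submodule.subset_span ⟨Pi.single j 1, rfl⟩, rfl⟩, ?_⟩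
  have hval : ∀ w : Xd d, En d (Pi.single j 1) w = fourier 1 (w j) := by
    intro w
    rw [En_apply]
    rw [Finset.prod_eq_single j (fun i _ hi => by rw [Pi.single_eq_of_ne hi, fourier_zero])
      (by simp)]
    rw [Pi.single_eq_same]
  simp only [hval]
  rw [fourier_one, fourier_one]
  intro h
  exact hj (AddCircle.injective_toCircle one_ne_zero (Subtype.coe_injective h))

lemma dense_spanE (F : C(Xd d, ℂ)) : F ∈ closure (spanE d : Set C(Xd d, ℂ)) := by
  have h := ContinuousMap.starSubalgebra_topologicalClosure_eq_top_of_separatesPoints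
    (algE d) algE_separates
  have : F ∈ (algE d).topologicalClosure := by rw [h]; trivial
  exact this
/-- the pi-space linear equiv underlying `t ↦ ∑ tᵢ • bᵢ` -/
def psiE : (Fin d → ℝ) ≃ₗ[ℝ] (Fin d → ℝ) :=
  (b.equivFun.symm : (Fin d → ℝ) ≃ₗ[ℝ] EuclideanSpace ℝ (Fin d)).trans
    (WithLp.linearEquiv 2 ℝ (Fin d → ℝ))

def eEq : (Fin d → ℝ) ≃ᵐ EuclideanSpace ℝ (Fin d) :=
  MeasurableEquiv.toLp 2 (Fin d → ℝ)

lemma eEq_psiE (t : Fin d → ℝ) : eEq (psiE b t) = b.equivFun.symm t := rfl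

lemma me_eEq : MeasurePreserving (eEq (d := d)) volume volume :=
  (EuclideanSpace.volume_preserving_symm_measurableEquiv_toLp (Fin d)).symm

lemma hpar : parallelepiped ⇑b = ⇑b.equivFun.symm '' (Icc 0 1) := by
  have h : (fun t : Fin d → ℝ => ∑ i, t i • b i) = fun t => b.equivFun.symm t := by
    funext t; rw [Module.Basis.equivFun_symm_apply]
  show (fun t : Fin d → ℝ => ∑ i, t i • b i) '' Icc 0 1 = _
  rw [h]

lemma cont_par : Continuous fun t : Fin d → ℝ => b.equivFun.symm t :=
  (b.equivFun.symm : (Fin d → ℝ) →ₗ[ℝ] EuclideanSpace ℝ (Fin d)).continuous_of_finiteDimensional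

lemma par_compact : IsCompact (parallelepiped ⇑b) := by
  rw [hpar]
  exact isCompact_Icc.image (cont_par b)

lemma par_meas : MeasurableSet (parallelepiped ⇑b) := (par_compact b).isClosed.measurableSet

lemma preimage_par : ⇑(eEq (d := d)) ⁻¹' (parallelepiped ⇑b) = ⇑(psiE b) '' (Icc 0 1) := by
  rw [hpar]
  ext u
  simp only [Set.mem_preimage, Set.mem_image]
  constructor
  · rintro ⟨t, ht, hteq⟩
    refine ⟨t, ht, ?_⟩
    apply (eEq (d := d)).injective
    rw [eEq_psiE, hteq]
  · rintro ⟨t, ht, rfl⟩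
    exact ⟨t, ht, (eEq_psiE b t).symm⟩

lemma det_psi_ne : LinearMap.det (psiE b).toLinearMap ≠ 0 :=
  IsUnit.ne_zero (LinearEquiv.isUnit_det' (psiE b))

lemma det_psi_pos : 0 < |LinearMap.det (psiE b).toLinearMap| :=
  abs_pos.mpr (det_psi_ne b)

lemma vol_par : volume (parallelepiped ⇑b)
    = ENNReal.ofReal |LinearMap.det (psiE b).toLinearMap| := by
  rw [← (me_eEq).measure_preimage (par_meas b).nullMeasurableSet, preimage_par]
  have h := Measure.addHaar_image_linearMap (volume : Measure (Fin d → ℝ))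
    (psiE b).toLinearMap (Icc 0 1)
  simp only [LinearEquiv.coe_coe] at h
  rw [h]
  simp [Real.volume_Icc_pi]

lemma setint_par (g : EuclideanSpace ℝ (Fin d) → ℂ) :
    ∫ x in parallelepiped ⇑b, g x
      = |LinearMap.det (psiE b).toLinearMap| • ∫ t in Icc (0 : Fin d → ℝ) 1,
          g (b.equivFun.symm t) := by
  rw [← (me_eEq).setIntegral_preimage_emb (eEq (d := d)).measurableEmbedding g _, preimage_par]
  have hder : ∀ t ∈ Icc (0 : Fin d → ℝ) 1, HasFDerivWithinAt (⇑(psiE b))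
      (LinearMap.toContinuousLinearMap (psiE b).toLinearMap) (Icc 0 1) t := fun t _ =>
    (LinearMap.toContinuousLinearMap (psiE b).toLinearMap).hasFDerivWithinAt
  rw [integral_image_eq_integral_abs_det_fderiv_smul volume measurableSet_Icc hder
    ((psiE b).injective.injOn) (fun u => g (eEq u))]
  simp_rw [eEq_psiE, ContinuousLinearMap.det, LinearMap.coe_toContinuousLinearMap]
  rw [integral_smul]

lemma avg_eq (g : EuclideanSpace ℝ (Fin d) → ℂ) :
    ((volume (parallelepiped ⇑b)).toReal)⁻¹ • ∫ x in parallelepiped ⇑b, g x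
      = ∫ t in Icc (0 : Fin d → ℝ) 1, g (b.equivFun.symm t) := by
  rw [vol_par, setint_par, ENNReal.toReal_ofReal (det_psi_pos b).le, smul_smul,
    inv_mul_cancel₀ (ne_of_gt (det_psi_pos b)), one_smul]
lemma oneDim_int (n : ℤ) :
    ∫ s in Icc (0:ℝ) 1, cexp ((2 * Real.pi * I * n) * s) = if n = 0 then 1 else 0 := by
  by_cases hn : n = 0
  · simp [hn, Real.volume_Icc]
  · rw [if_neg hn]
    rw [MeasureTheory.integral_Icc_eq_integral_Ioc,
      ← intervalIntegral.integral_of_le (zero_le_one (α := ℝ))]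
    have hc : (2 * Real.pi * I * n : ℂ) ≠ 0 := by
      simp [Real.pi_ne_zero, I_ne_zero, hn]
    rw [integral_exp_mul_complex hc]
    have h1 : cexp (2 * Real.pi * I * n * ((1:ℝ):ℂ)) = 1 := by
      rw [show (2 * Real.pi * I * n * ((1:ℝ):ℂ) : ℂ) = n * (2 * Real.pi * I) by push_cast; ring]
      exact Complex.exp_int_mul_two_pi_mul_I n
    have h0 : cexp (2 * Real.pi * I * n * ((0:ℝ):ℂ)) = 1 := by
      rw [show (2 * Real.pi * I * n * ((0:ℝ):ℂ) : ℂ) = 0 by push_cast; ring, Complex.exp_zero]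
    rw [h1, h0, sub_self, zero_div]

lemma En_piq (n : Fin d → ℤ) (t : Fin d → ℝ) :
    En d n (piq d t) = ∏ j, cexp ((2 * Real.pi * I * (n j)) * (t j)) := by
  show ∏ j, fourier (n j) ((t j : AddCircle (1:ℝ))) = _
  apply Finset.prod_congr rfl
  intro j _
  rw [fourier_coe_apply]
  push_cast
  ring_nf

lemma avg_En (n : Fin d → ℤ) :
    ∫ t in Icc (0 : Fin d → ℝ) 1, En d n (piq d t) = if n = 0 then 1 else 0 := by
  have key : ∫ t in Icc (0 : Fin d → ℝ) 1, En d n (piq d t)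
      = ∏ j, ∫ s in Icc (0:ℝ) 1, cexp ((2 * Real.pi * I * (n j)) * s) := by
    simp_rw [En_piq]
    rw [← MeasureTheory.integral_indicator measurableSet_Icc]
    have hind : (Icc (0 : Fin d → ℝ) 1).indicator
          (fun t => ∏ j, cexp ((2 * Real.pi * I * (n j)) * (t j)))
        = fun t => ∏ j, (Icc (0:ℝ) 1).indicator
            (fun s => cexp ((2 * Real.pi * I * (n j)) * s)) (t j) := by
      funext t
      by_cases ht : t ∈ Icc (0 : Fin d → ℝ) 1
      · rw [Set.indicator_of_mem ht]
        have : ∀ j, t j ∈ Icc (0:ℝ) 1 := by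
          intro j
          rw [Set.mem_Icc] at ht
          exact ⟨ht.1 j, ht.2 j⟩
        exact (Finset.prod_congr rfl fun j _ => (Set.indicator_of_mem (this j)
          (fun s : ℝ => cexp ((2 * Real.pi * I * (n j)) * s))).symm)
      · rw [Set.indicator_of_notMem ht]
        have : ∃ j, t j ∉ Icc (0:ℝ) 1 := by
          by_contra h
          push_neg at h
          exact ht (Set.mem_Icc.mpr ⟨fun j => (h j).1, fun j => (h j).2⟩)
        obtain ⟨j, hj⟩ := this
        rw [eq_comm]
        apply Finset.prod_eq_zero (Finset.mem_univ j)
        rw [Set.indicator_of_notMem hj]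
      
    simp only [hind, volume_pi]
    rw [MeasureTheory.integral_fintype_prod_eq_prod
      (f := fun j s => (Icc (0:ℝ) 1).indicator (fun s => cexp ((2 * Real.pi * I * (n j)) * s)) s)]
    apply Finset.prod_congr rfl
    intro j _
    rw [MeasureTheory.integral_indicator measurableSet_Icc]
  rw [key]
  by_cases hn : n = 0
  · subst hn
    simp_rw [oneDim_int]
    simp
  · rw [if_neg hn]
    obtain ⟨j, hj⟩ : ∃ j, n j ≠ 0 := by
      by_contra h
      push_neg at h
      exact hn (funext h)
    apply Finset.prod_eq_zero (Finset.mem_univ j)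
    rw [oneDim_int, if_neg hj]


open scoped RealInnerProductSpace

/-- prefactor cancellation, real version -/
lemma real_pref {ε : ℝ} (hε : 0 < ε) :
    (ε / Real.pi) ^ ((d:ℝ)/2) * (Real.pi / ε) ^ ((d:ℝ)/2) = 1 := by
  rw [← Real.mul_rpow (by positivity) (by positivity)]
  have h : ε / Real.pi * (Real.pi / ε) = 1 := by
    field_simp
  rw [h, Real.one_rpow]

/-- prefactor cancellation, complex version -/
lemma cpow_pref {ε : ℝ} (hε : 0 < ε) :
    (((ε / Real.pi) ^ ((d:ℝ)/2) : ℝ) : ℂ) * ((Real.pi : ℂ) / (ε : ℂ)) ^ ((d:ℂ)/2) = 1 := by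
  have h1 : ((Real.pi : ℂ) / (ε : ℂ)) = ((Real.pi / ε : ℝ) : ℂ) := by push_cast; ring
  have h2 : ((d:ℂ)/2) = (((d:ℝ)/2 : ℝ) : ℂ) := by push_cast; ring
  rw [h1, h2, ← Complex.ofReal_cpow (by positivity), ← Complex.ofReal_mul,
    real_pref hε, Complex.ofReal_one]

/-- the dual vector of a character -/
def wv (n : Fin d → ℤ) : EuclideanSpace ℝ (Fin d) :=
  (InnerProductSpace.toDual ℝ (EuclideanSpace ℝ (Fin d))).symm
    (LinearMap.toContinuousLinearMap (∑ j, (n j : ℝ) • (b.coord j)))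

lemma inner_wv (n : Fin d → ℤ) (x : EuclideanSpace ℝ (Fin d)) :
    ⟪wv b n, x⟫ = ∑ j, (n j : ℝ) * b.equivFun x j := by
  unfold wv
  rw [InnerProductSpace.toDual_symm_apply]
  rw [LinearMap.coe_toContinuousLinearMap']
  rw [LinearMap.sum_apply]
  refine Finset.sum_congr rfl ?_
  intro j _
  rw [LinearMap.smul_apply, Module.Basis.coord_apply, smul_eq_mul, Module.Basis.equivFun_apply]

lemma wv_zero : wv b 0 = 0 := by
  unfold wv
  have h : (∑ j, ((0 : Fin d → ℤ) j : ℝ) • (b.coord j)) = 0 := by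
    simp
  rw [h]
  simp

lemma wv_ne_zero {n : Fin d → ℤ} (hn : n ≠ 0) : wv b n ≠ 0 := by
  intro h0
  apply hn
  funext i
  have := inner_wv b n (b i)
  rw [h0, inner_zero_left] at this
  have hsum : ∑ j, (n j : ℝ) * b.equivFun (b i) j = (n i : ℝ) := by
    have : ∀ j, b.equivFun (b i) j = if i = j then 1 else 0 := by
      intro j
      rw [Module.Basis.equivFun_apply, Module.Basis.repr_self, Finsupp.single_apply]
    simp_rw [this, mul_ite, mul_one, mul_zero]
    simp
  rw [hsum] at this
  exact_mod_cast this.symm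

lemma En_qm (n : Fin d → ℤ) (x : EuclideanSpace ℝ (Fin d)) :
    En d n (qm b x) = cexp ((2 * Real.pi * I) * ((⟪wv b n, x⟫ : ℝ) : ℂ)) := by
  have h : En d n (qm b x) = ∏ j, cexp ((2 * Real.pi * I * (n j)) * (b.equivFun x j)) :=
    En_piq n (b.equivFun x)
  rw [h, ← Complex.exp_sum]
  congr 1
  rw [inner_wv]
  push_cast
  rw [Finset.mul_sum]
  apply Finset.sum_congr rfl
  intro j _
  ring

/-- the Gaussian integral against a character -/
lemma gauss_int_En {ε : ℝ} (hε : 0 < ε) (n : Fin d → ℤ) :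
    ∫ x : EuclideanSpace ℝ (Fin d), Complex.exp (-((ε * ‖x‖ ^ 2 : ℝ) : ℂ)) * En d n (qm b x)
      = ((Real.pi : ℂ) / (ε : ℂ)) ^ ((d:ℂ)/2)
          * cexp (((-(Real.pi^2) * ‖wv b n‖^2 / ε : ℝ) : ℂ)) := by
  have hfun : ∀ x : EuclideanSpace ℝ (Fin d),
      Complex.exp (-((ε * ‖x‖ ^ 2 : ℝ) : ℂ)) * En d n (qm b x)
        = cexp (-(ε:ℂ) * ‖x‖^2 + (2 * Real.pi * I) * ((⟪wv b n, x⟫ : ℝ) : ℂ)) := by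
    intro x
    rw [En_qm, ← Complex.exp_add]
    congr 1
    push_cast
    ring
  simp only [hfun]
  rw [GaussianFourier.integral_cexp_neg_mul_sq_norm_add (by simpa using hε)
    (2 * Real.pi * I) (wv b n)]
  rw [finrank_euclideanSpace_fin]
  congr 1
  have h2 : ((2 * (Real.pi:ℂ) * I)^2) = -(4 * (Real.pi:ℂ)^2) := by
    rw [mul_pow, mul_pow, I_sq]
    ring
  rw [h2]
  congr 1
  push_cast
  have hε' : (ε : ℂ) ≠ 0 := by exact_mod_cast ne_of_gt hε
  field_simp

/-- the scaled Gaussian average functional -/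
def LL (F : C(Xd d, ℂ)) (ε : ℝ) : ℂ :=
  ((ε / Real.pi) ^ ((d : ℝ) / 2) : ℝ) •
    ∫ x : EuclideanSpace ℝ (Fin d), Complex.exp (-((ε * ‖x‖ ^ 2 : ℝ) : ℂ)) * F (qm b x)

/-- the average over the cube -/
def AV (F : C(Xd d, ℂ)) : ℂ := ∫ t in Icc (0 : Fin d → ℝ) 1, F (piq d t)

def GoodP (F : C(Xd d, ℂ)) : Prop := Tendsto (LL b F) (𝓝[>] (0:ℝ)) (𝓝 (AV F))

lemma integrable_gauss {ε : ℝ} (hε : 0 < ε) :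
    Integrable (fun x : EuclideanSpace ℝ (Fin d) =>
      Complex.exp (-((ε * ‖x‖ ^ 2 : ℝ) : ℂ))) := by
  have h := GaussianFourier.integrable_cexp_neg_mul_sq_norm_add (b := (ε:ℂ))
    (by simpa using hε) 0 (0 : EuclideanSpace ℝ (Fin d))
  apply h.congr
  apply Filter.Eventually.of_forall
  intro x
  apply congrArg
  push_cast
  ring

lemma integrable_gauss_real {ε : ℝ} (hε : 0 < ε) :
    Integrable (fun x : EuclideanSpace ℝ (Fin d) => Real.exp (-(ε * ‖x‖ ^ 2))) := by
  apply (integrable_gauss (d := d) hε).norm.congr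
  apply Filter.Eventually.of_forall
  intro x
  show ‖Complex.exp (-((ε * ‖x‖ ^ 2 : ℝ) : ℂ))‖ = Real.exp (-(ε * ‖x‖ ^ 2))
  rw [Complex.norm_exp]
  apply congrArg
  rw [Complex.neg_re, Complex.ofReal_re]

lemma integrable_mul {ε : ℝ} (hε : 0 < ε) (F : C(Xd d, ℂ)) :
    Integrable (fun x : EuclideanSpace ℝ (Fin d) =>
      Complex.exp (-((ε * ‖x‖ ^ 2 : ℝ) : ℂ)) * F (qm b x)) := by
  have hbd : Integrable (fun x : EuclideanSpace ℝ (Fin d) =>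
      F (qm b x) * Complex.exp (-((ε * ‖x‖ ^ 2 : ℝ) : ℂ))) :=
    (integrable_gauss hε).bdd_mul
      ((F.continuous.comp (qm_continuous b)).aestronglyMeasurable)
      (Filter.Eventually.of_forall fun x => F.norm_coe_le_norm _)
  exact hbd.congr (Filter.Eventually.of_forall fun x => mul_comm _ _)

lemma integrableOn_cube (F : C(Xd d, ℂ)) :
    IntegrableOn (fun t => F (piq d t)) (Icc (0 : Fin d → ℝ) 1) :=
  (F.continuous.comp (piq_oqm (d := d)).continuous).integrableOn_Icc

lemma vol_cube : volume (Icc (0 : Fin d → ℝ) 1) = 1 := by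
  simp [Real.volume_Icc_pi]

lemma norm_LL_le {ε : ℝ} (hε : 0 < ε) (F : C(Xd d, ℂ)) : ‖LL b F ε‖ ≤ ‖F‖ := by
  unfold LL
  rw [norm_smul]
  have hr : (0:ℝ) ≤ (ε / Real.pi) ^ ((d:ℝ)/2) := Real.rpow_nonneg (by positivity) _
  rw [Real.norm_of_nonneg hr]
  have hbound : ‖∫ x : EuclideanSpace ℝ (Fin d),
        Complex.exp (-((ε * ‖x‖ ^ 2 : ℝ) : ℂ)) * F (qm b x)‖
      ≤ ∫ x : EuclideanSpace ℝ (Fin d), Real.exp (-(ε * ‖x‖ ^ 2)) * ‖F‖ := by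
    apply norm_integral_le_of_norm_le ((integrable_gauss_real hε).mul_const _)
    apply Filter.Eventually.of_forall
    intro x
    rw [norm_mul]
    apply mul_le_mul _ (F.norm_coe_le_norm _) (norm_nonneg _) (Real.exp_nonneg _)
    rw [Complex.norm_exp]
    apply le_of_eq
    apply congrArg
    rw [Complex.neg_re, Complex.ofReal_re]
  have hval : ∫ x : EuclideanSpace ℝ (Fin d), Real.exp (-(ε * ‖x‖ ^ 2)) * ‖F‖
      = (Real.pi / ε) ^ ((d:ℝ)/2) * ‖F‖ := by
    rw [MeasureTheory.integral_mul_const]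
    congr 1
    have := GaussianFourier.integral_rexp_neg_mul_sq_norm (V := EuclideanSpace ℝ (Fin d)) hε
    simp_rw [neg_mul] at this
    rw [this, finrank_euclideanSpace_fin]
  calc (ε / Real.pi) ^ ((d:ℝ)/2) * ‖∫ x : EuclideanSpace ℝ (Fin d),
        Complex.exp (-((ε * ‖x‖ ^ 2 : ℝ) : ℂ)) * F (qm b x)‖
      ≤ (ε / Real.pi) ^ ((d:ℝ)/2) * ((Real.pi / ε) ^ ((d:ℝ)/2) * ‖F‖) := by
        apply mul_le_mul_of_nonneg_left _ hr
        rw [← hval]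
        exact hbound
    _ = ((ε / Real.pi) ^ ((d:ℝ)/2) * (Real.pi / ε) ^ ((d:ℝ)/2)) * ‖F‖ := by ring
    _ = ‖F‖ := by rw [real_pref hε, one_mul]

lemma norm_AV_le (F : C(Xd d, ℂ)) : ‖AV F‖ ≤ ‖F‖ := by
  unfold AV
  have h := norm_setIntegral_le_of_norm_le_const (μ := volume)
    (s := Icc (0 : Fin d → ℝ) 1) (C := ‖F‖) (f := fun t => F (piq d t))
    (by rw [vol_cube]; exact ENNReal.one_lt_top)
    (fun x _ => F.norm_coe_le_norm _)
  rw [Measure.real, vol_cube] at h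
  simpa using h

lemma LL_add {ε : ℝ} (hε : 0 < ε) (F G : C(Xd d, ℂ)) :
    LL b (F + G) ε = LL b F ε + LL b G ε := by
  unfold LL
  simp only [ContinuousMap.add_apply, mul_add]
  rw [integral_add (integrable_mul b hε F) (integrable_mul b hε G), smul_add]

lemma LL_sub {ε : ℝ} (hε : 0 < ε) (F G : C(Xd d, ℂ)) :
    LL b (F - G) ε = LL b F ε - LL b G ε := by
  unfold LL
  simp only [ContinuousMap.sub_apply, mul_sub]
  rw [integral_sub (integrable_mul b hε F) (integrable_mul b hε G), smul_sub]

lemma LL_smul {ε : ℝ} (hε : 0 < ε) (c : ℂ) (F : C(Xd d, ℂ)) :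
    LL b (c • F) ε = c * LL b F ε := by
  unfold LL
  simp only [ContinuousMap.smul_apply, smul_eq_mul]
  simp_rw [mul_left_comm _ c]
  rw [MeasureTheory.integral_const_mul]
  rw [Complex.real_smul, Complex.real_smul]
  ring

lemma AV_add (F G : C(Xd d, ℂ)) : AV (F + G) = AV F + AV G := by
  unfold AV
  simp only [ContinuousMap.add_apply]
  rw [integral_add (integrableOn_cube F) (integrableOn_cube G)]

lemma AV_sub (F G : C(Xd d, ℂ)) : AV (F - G) = AV F - AV G := by
  unfold AV
  simp only [ContinuousMap.sub_apply]
  rw [integral_sub (integrableOn_cube F) (integrableOn_cube G)]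

lemma AV_smul (c : ℂ) (F : C(Xd d, ℂ)) : AV (c • F) = c * AV F := by
  unfold AV
  simp only [ContinuousMap.smul_apply, smul_eq_mul]
  rw [MeasureTheory.integral_const_mul]

lemma LL_En {ε : ℝ} (hε : 0 < ε) (n : Fin d → ℤ) :
    LL b (En d n) ε = Complex.exp (((-(Real.pi^2) * ‖wv b n‖^2 / ε : ℝ) : ℂ)) := by
  unfold LL
  rw [gauss_int_En b hε n, Complex.real_smul, ← mul_assoc, cpow_pref hε, one_mul]

lemma AV_En (n : Fin d → ℤ) : AV (En d n) = if n = 0 then 1 else 0 := avg_En n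

lemma P_En (n : Fin d → ℤ) : GoodP b (En d n) := by
  unfold GoodP
  rw [AV_En]
  by_cases hn : n = 0
  · subst hn
    rw [if_pos rfl]
    apply Tendsto.congr' _ tendsto_const_nhds
    filter_upwards [self_mem_nhdsWithin] with ε hε
    rw [LL_En b hε, wv_zero]
    simp
  · rw [if_neg hn]
    set a : ℝ := Real.pi ^ 2 * ‖wv b n‖ ^ 2 with ha
    have hapos : 0 < a := by
      have := wv_ne_zero b hn
      have h2 : 0 < ‖wv b n‖ := norm_pos_iff.mpr this
      positivity
    have t1 : Tendsto (fun ε : ℝ => -(Real.pi^2) * ‖wv b n‖^2 / ε) (𝓝[>] (0:ℝ)) atBot := by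
      have h1 : Tendsto (fun ε : ℝ => ε⁻¹) (𝓝[>] (0:ℝ)) atTop := tendsto_inv_nhdsGT_zero
      have h2 : Tendsto (fun ε : ℝ => a * ε⁻¹) (𝓝[>] (0:ℝ)) atTop :=
        Tendsto.const_mul_atTop hapos h1
      have h3 := tendsto_neg_atTop_atBot.comp h2
      apply h3.congr
      intro ε
      simp only [Function.comp_apply]
      rw [ha]
      ring
    have t2 : Tendsto (fun ε : ℝ => Real.exp (-(Real.pi^2) * ‖wv b n‖^2 / ε))
        (𝓝[>] (0:ℝ)) (𝓝 0) := Real.tendsto_exp_atBot.comp t1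
    have t3 := (Complex.continuous_ofReal.tendsto (0:ℝ)).comp t2
    rw [Complex.ofReal_zero] at t3
    apply Tendsto.congr' _ t3
    filter_upwards [self_mem_nhdsWithin] with ε hε
    show ((Real.exp (-(Real.pi^2) * ‖wv b n‖^2 / ε) : ℝ) : ℂ) = LL b (En d n) ε
    rw [LL_En b hε, ← Complex.ofReal_exp]

lemma P_span {F : C(Xd d, ℂ)} (hF : F ∈ spanE d) : GoodP b F := by
  induction hF using Submodule.span_induction with
  | mem x hx =>
      obtain ⟨n, rfl⟩ := hx
      exact P_En b n
  | zero =>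
      unfold GoodP
      have hLL : ∀ ε : ℝ, LL b 0 ε = 0 := by
        intro ε
        unfold LL
        simp
      have hAV : AV (0 : C(Xd d, ℂ)) = 0 := by
        unfold AV
        simp
      rw [hAV]
      have hLL2 : LL b (0 : C(Xd d, ℂ)) = fun _ => 0 := funext hLL
      rw [hLL2]
      exact tendsto_const_nhds
  | add x y hx hy ihx ihy =>
      unfold GoodP
      rw [AV_add]
      apply Tendsto.congr' _ (ihx.add ihy)
      filter_upwards [self_mem_nhdsWithin] with ε hε
      rw [LL_add b hε]
  | smul c x hx ihx =>
      unfold GoodP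
      rw [AV_smul]
      apply Tendsto.congr' _ (ihx.const_mul c)
      filter_upwards [self_mem_nhdsWithin] with ε hε
      rw [LL_smul b hε]

lemma master (F : C(Xd d, ℂ)) : GoodP b F := by
  have hcl : F ∈ closure (spanE d : Set C(Xd d, ℂ)) := dense_spanE F
  unfold GoodP
  rw [Metric.tendsto_nhds]
  intro δ hδ
  obtain ⟨G, hG_mem, hFG⟩ := Metric.mem_closure_iff.mp hcl (δ/4) (by linarith)
  have hPG := P_span b hG_mem
  have h2 : ∀ᶠ ε in 𝓝[>] (0:ℝ), dist (LL b G ε) (AV G) < δ/4 := by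
    rw [GoodP, Metric.tendsto_nhds] at hPG
    exact hPG _ (by linarith)
  filter_upwards [h2, self_mem_nhdsWithin] with ε h2ε hε
  have hε' : (0:ℝ) < ε := hε
  have key : dist (LL b F ε) (AV F)
      ≤ dist (LL b F ε) (LL b G ε) + dist (LL b G ε) (AV G) + dist (AV G) (AV F) :=
    dist_triangle4 _ _ _ _
  have b1 : dist (LL b F ε) (LL b G ε) ≤ δ/4 := by
    rw [dist_eq_norm, ← LL_sub b hε']
    calc ‖LL b (F - G) ε‖ ≤ ‖F - G‖ := norm_LL_le b hε' _
      _ = dist F G := (dist_eq_norm F G).symm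
      _ ≤ δ/4 := le_of_lt hFG
  have b3 : dist (AV G) (AV F) ≤ δ/4 := by
    rw [dist_eq_norm, ← AV_sub]
    calc ‖AV (G - F)‖ ≤ ‖G - F‖ := norm_AV_le _
      _ = dist G F := (dist_eq_norm G F).symm
      _ ≤ δ/4 := by rw [dist_comm]; exact le_of_lt hFG
  linarith

end Stmt8

open Stmt8 in
/-- If `Γ` is the full-rank lattice generated by a basis `b` of `V₀ = ℝ^{d₀}` and
`f` is a continuous `Γ`-periodic function, then
`lim_{ε→0⁺} (ε/π)^{d₀/2} ∫ e^{−ε‖x‖²} f(x) dx = (1/vol(Q)) ∫_Q f(x) dx`,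
where `Q` is the fundamental parallelepiped of the basis. -/
theorem stmt_8 (d : ℕ)
    (b : Module.Basis (Fin d) ℝ (EuclideanSpace ℝ (Fin d)))
    (f : EuclideanSpace ℝ (Fin d) → ℂ) (hf : Continuous f)
    (hper : ∀ (i : Fin d) (x : EuclideanSpace ℝ (Fin d)), f (x + b i) = f x) :
    Tendsto (fun ε : ℝ =>
        ((ε / Real.pi) ^ ((d : ℝ) / 2) : ℝ) •
          ∫ x : EuclideanSpace ℝ (Fin d),
            Complex.exp (-((ε * ‖x‖ ^ 2 : ℝ) : ℂ)) * f x)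
      (𝓝[>] (0 : ℝ))
      (𝓝 (((volume (parallelepiped ⇑b)).toReal)⁻¹ •
        ∫ x in parallelepiped ⇑b, f x)) := by
  have hFq : ∀ x, f (rep b (qm b x)) = f x := rep_qm b hper
  have hcomp : (fun v => f (rep b v)) ∘ (qm b) = f := funext hFq
  have hFc : Continuous (fun v => f (rep b v)) := by
    rw [← (qm_oqm b).continuous_comp_iff]
    rw [hcomp]
    exact hf
  set F : C(Xd d, ℂ) := ⟨fun v => f (rep b v), hFc⟩ with hFdef
  have hFqm : ∀ x, F (qm b x) = f x := hFq
  have hm := master b F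
  unfold GoodP at hm
  have hLHS : LL b F = fun ε : ℝ =>
      ((ε / Real.pi) ^ ((d : ℝ) / 2) : ℝ) •
        ∫ x : EuclideanSpace ℝ (Fin d),
          Complex.exp (-((ε * ‖x‖ ^ 2 : ℝ) : ℂ)) * f x := by
    funext ε
    unfold LL
    congr 1
    apply integral_congr_ae
    apply Filter.Eventually.of_forall
    intro x
    change Complex.exp (-((ε * ‖x‖ ^ 2 : ℝ) : ℂ)) * F (qm b x)
      = Complex.exp (-((ε * ‖x‖ ^ 2 : ℝ) : ℂ)) * f x
    rw [hFqm]
  have hRHS : AV F = ((volume (parallelepiped ⇑b)).toReal)⁻¹ •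
      ∫ x in parallelepiped ⇑b, f x := by
    rw [avg_eq b f]
    unfold AV
    apply integral_congr_ae
    apply Filter.Eventually.of_forall
    intro t
    change F (piq d t) = f (b.equivFun.symm t)
    rw [← hFqm (b.equivFun.symm t), qm_symm b t]
  rw [hLHS, hRHS] at hm
  exact hm
end Stmt8Aux
end

section
/- Let dμ be a normalized non-degenerate centered oscillatory Gauss measure on a finite-dimensional real inner product space V (dμ(x) = (1/Z)e^{−(i/2)⟨x,Sx⟩}dx with S symmetric invertible, Z chosen so ∫_∼1 dμ = 1), and let Y: V → ℝ be an affine map with ∫_∼ Y² dμ = (∫_∼ Y dμ)². Then for every n ∈ ℕ, ∫_∼ Yⁿ dμ = (∫_∼ Y dμ)ⁿ, and ∫_∼ e^{Y} dμ = exp(∫_∼ Y dμ), where ∫_∼ f dμ := lim_{ε→0⁺} ∫ f(x) e^{−ε‖x‖²} dμ(x). -/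
open MeasureTheory Filter Topology Complex

noncomputable section

lemma auxS17_ofScalars_coeff (c : ℕ → ℂ) (n : ℕ) :
    (FormalMultilinearSeries.ofScalars ℂ c).coeff n = c n := by
  have hone : (List.ofFn (1 : Fin n → ℂ)).prod = 1 := by
    rw [show (1 : Fin n → ℂ) = fun _ => (1:ℂ) from rfl, List.ofFn_const, List.prod_replicate,
      one_pow]
  simp [FormalMultilinearSeries.ofScalars, FormalMultilinearSeries.coeff, hone]

/-- coefficient uniqueness for everywhere-convergent power series over ℂ -/
lemma auxS17_coeff_unique {f : ℂ → ℂ} {c₁ c₂ : ℕ → ℂ}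
    (h₁ : ∀ t, HasSum (fun n => c₁ n * t ^ n) (f t))
    (h₂ : ∀ t, HasSum (fun n => c₂ n * t ^ n) (f t)) : c₁ = c₂ := by
  have key : ∀ (c : ℕ → ℂ), (∀ t, HasSum (fun n => c n * t ^ n) (f t)) →
      HasFPowerSeriesAt f (FormalMultilinearSeries.ofScalars ℂ c) 0 := by
    intro c hc
    rw [hasFPowerSeriesAt_iff]
    filter_upwards with z
    simpa [auxS17_ofScalars_coeff, smul_eq_mul, mul_comm, zero_add] using hc z
  have h := (key c₁ h₁).eq_formalMultilinearSeries (key c₂ h₂)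
  funext n
  have h2 := congrArg (fun p => FormalMultilinearSeries.coeff p n) h
  simpa [auxS17_ofScalars_coeff] using h2

def auxS17_Qg {K : Type*} [RCLike K] (q : K) (n : ℕ) : K :=
  if Even n then (q/4)^(n/2) / (Nat.factorial (n/2) : K) else 0

def auxS17_h (c q : ℂ) (n : ℕ) : ℂ :=
  ∑ kl ∈ Finset.HasAntidiagonal.antidiagonal n, (c^kl.1 / (Nat.factorial kl.1 : ℂ)) * auxS17_Qg q kl.2

lemma auxS17_P_hasSum {K : Type*} [RCLike K] (c t : K) :
    HasSum (fun n => (c ^ n / (Nat.factorial n : K)) * t ^ n) (NormedSpace.exp (c * t)) := by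
  have h := NormedSpace.expSeries_div_hasSum_exp (c * t)
  convert h using 2 with n
  rw [mul_pow, mul_div_right_comm]

lemma auxS17_Q_hasSum {K : Type*} [RCLike K] (q t : K) :
    HasSum (fun n => auxS17_Qg q n * t ^ n) (NormedSpace.exp (q/4 * t^2)) := by
  have h := NormedSpace.expSeries_div_hasSum_exp (q/4 * t^2)
  have hinj : Function.Injective (fun m : ℕ => 2 * m) := by
    intro a b hab
    simp only at hab
    omega
  refine (Function.Injective.hasSum_iff hinj ?_).mp ?_
  · intro n hn
    have hne : ¬ Even n := by
      simp only [Set.mem_range] at hn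
      rintro ⟨m, hm⟩
      exact hn ⟨m, by omega⟩
    simp [auxS17_Qg, hne]
  · convert h using 2 with m
    simp only [Function.comp]
    have he : Even (2*m) := even_two_mul m
    have h2 : (2*m)/2 = m := by omega
    rw [auxS17_Qg, if_pos he, h2, mul_pow, pow_mul, mul_div_right_comm]

lemma auxS17_norm4 {K : Type*} [RCLike K] : ‖(4:K)‖ = 4 := by
  rw [show (4:K) = ((4:ℕ):K) by norm_cast, RCLike.norm_natCast]
  norm_num

lemma auxS17_P_summable_norm (c t : ℂ) :
    Summable (fun n => ‖(c^n / (Nat.factorial n : ℂ)) * t^n‖) := by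
  have h := (auxS17_P_hasSum (K := ℝ) ‖c‖ ‖t‖).summable
  refine h.congr (fun n => ?_)
  rw [norm_mul, norm_div, norm_pow, norm_pow, RCLike.norm_natCast]

lemma auxS17_Qg_norm (q : ℂ) (n : ℕ) : ‖auxS17_Qg q n‖ = auxS17_Qg ‖q‖ n := by
  by_cases he : Even n
  · rw [auxS17_Qg, auxS17_Qg, if_pos he, if_pos he, norm_div, norm_pow, norm_div,
      RCLike.norm_natCast, auxS17_norm4]
  · simp [auxS17_Qg, he]

lemma auxS17_Q_summable_norm (q t : ℂ) :
    Summable (fun n => ‖auxS17_Qg q n * t^n‖) := by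
  have h := (auxS17_Q_hasSum (K := ℝ) ‖q‖ ‖t‖).summable
  refine h.congr (fun n => ?_)
  rw [norm_mul, norm_pow, auxS17_Qg_norm]

lemma auxS17_series2 (A c q t : ℂ) :
    HasSum (fun n => (A * auxS17_h c q n) * t ^ n)
      (A * Complex.exp (t * c + t ^ 2 * (q / 4))) := by
  set f : ℕ → ℂ := fun n => (c^n/(Nat.factorial n : ℂ)) * t^n with hf_def
  set g : ℕ → ℂ := fun n => auxS17_Qg q n * t^n with hg_def
  have hf : Summable (fun n => ‖f n‖) := auxS17_P_summable_norm c t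
  have hg : Summable (fun n => ‖g n‖) := auxS17_Q_summable_norm q t
  have hsum : Summable fun n => ∑ kl ∈ Finset.HasAntidiagonal.antidiagonal n, f kl.1 * g kl.2 :=
    (summable_norm_sum_mul_antidiagonal_of_summable_norm hf hg).of_norm
  have htsum := tsum_mul_tsum_eq_tsum_sum_antidiagonal_of_summable_norm hf hg
  have hfs : HasSum f (Complex.exp (c * t)) := by
    have := auxS17_P_hasSum c t
    rwa [← Complex.exp_eq_exp_ℂ] at this
  have hgs : HasSum g (Complex.exp (q/4 * t^2)) := by
    have := auxS17_Q_hasSum q t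
    rwa [← Complex.exp_eq_exp_ℂ] at this
  have key : HasSum (fun n => ∑ kl ∈ Finset.HasAntidiagonal.antidiagonal n, f kl.1 * g kl.2)
      (Complex.exp (c*t) * Complex.exp (q/4*t^2)) := by
    have h2 := hsum.hasSum
    rwa [← htsum, hfs.tsum_eq, hgs.tsum_eq] at h2
  have hterm : (fun n => ∑ kl ∈ Finset.HasAntidiagonal.antidiagonal n, f kl.1 * g kl.2)
      = fun n => auxS17_h c q n * t^n := by
    funext n
    rw [auxS17_h, Finset.sum_mul]
    apply Finset.sum_congr rfl
    intro kl hkl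
    have hn : kl.1 + kl.2 = n := Finset.HasAntidiagonal.mem_antidiagonal.mp hkl
    simp only [hf_def, hg_def]
    rw [← hn, pow_add]
    ring
  rw [hterm] at key
  have := key.mul_left A
  have hfun : (fun n => (A * auxS17_h c q n) * t ^ n) = fun i => A * (auxS17_h c q i * t ^ i) := by
    funext n; ring
  rw [hfun, show Complex.exp (t * c + t ^ 2 * (q / 4)) = Complex.exp (c * t) * Complex.exp (q / 4 * t ^ 2) by
    rw [← Complex.exp_add]; ring_nf]
  exact this

lemma auxS17_h_one (c q : ℂ) : auxS17_h c q 1 = c := by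
  rw [auxS17_h, Finset.Nat.sum_antidiagonal_eq_sum_range_succ_mk]
  simp [Finset.sum_range_succ, auxS17_Qg, Nat.even_iff]

lemma auxS17_h_two (c q : ℂ) : auxS17_h c q 2 = c^2/2 + q/4 := by
  rw [auxS17_h, Finset.Nat.sum_antidiagonal_eq_sum_range_succ_mk]
  rw [Finset.sum_range_succ, Finset.sum_range_succ, Finset.sum_range_one]
  norm_num [auxS17_Qg, Nat.even_iff]
  ring

lemma auxS17_h_qzero (c : ℂ) (n : ℕ) : auxS17_h c 0 n = c^n/(Nat.factorial n : ℂ) := by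
  rw [auxS17_h, Finset.Nat.sum_antidiagonal_eq_sum_range_succ_mk]
  rw [Finset.sum_eq_single_of_mem n (Finset.self_mem_range_succ n)]
  · simp [auxS17_Qg]
  · intro k hk hkn
    have hk' : k < n := by
      have := Finset.mem_range.mp hk; omega
    have hpos : 0 < n - k := by omega
    rcases Nat.even_or_odd (n - k) with he | ho
    · have h2 : 0 < (n - k)/2 := by
        rcases he with ⟨m, hm⟩; omega
      rw [auxS17_Qg, if_pos he]
      rw [zero_div, zero_pow (by omega), zero_div, mul_zero]
    · rw [auxS17_Qg, if_neg ((Nat.not_even_iff_odd).mpr ho), mul_zero]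

lemma auxS17_cpow_rI (r : ℝ) (hr : 0 < r) (s : ℝ) (hs : s = 1 ∨ s = -1) :
    ((r : ℂ) * (-(s:ℂ) * Complex.I)) ^ (1/2 : ℂ)
      = ((r ^ ((1:ℝ)/2) : ℝ) : ℂ) * Complex.exp (-(s:ℂ) * (↑Real.pi/4) * Complex.I) := by
  have hz : (r : ℂ) * (-(s:ℂ) * Complex.I) ≠ 0 := by
    apply mul_ne_zero
    · exact_mod_cast ne_of_gt hr
    · apply mul_ne_zero _ Complex.I_ne_zero
      rcases hs with h | h <;> simp [h]
  rw [Complex.cpow_def_of_ne_zero hz]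
  have habs : ‖(r : ℂ) * (-(s:ℂ) * Complex.I)‖ = r := by
    rcases hs with h | h <;>
      simp [h, norm_mul, Complex.norm_real, Complex.norm_I, abs_of_pos hr]
  have harg : Complex.arg ((r : ℂ) * (-(s:ℂ) * Complex.I)) = -(s * (Real.pi/2)) := by
    rcases hs with h | h
    · have : (-(s:ℂ) * Complex.I) = -Complex.I := by rw [h]; push_cast; ring
      rw [this, Complex.arg_real_mul _ hr, Complex.arg_neg_I, h]
      ring
    · have : (-(s:ℂ) * Complex.I) = Complex.I := by rw [h]; push_cast; ring
      rw [this, Complex.arg_real_mul _ hr, Complex.arg_I, h]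
      ring
  have hlog : Complex.log ((r : ℂ) * (-(s:ℂ) * Complex.I))
      = ((Real.log r : ℝ) : ℂ) + ((-(s * (Real.pi/2)) : ℝ) : ℂ) * Complex.I := by
    apply Complex.ext
    · rw [Complex.log_re, habs]; simp
    · rw [Complex.log_im, harg]; simp
  rw [hlog]
  rw [add_mul, Complex.exp_add]
  congr 1
  · rw [show (((Real.log r : ℝ)) : ℂ) * (1/2 : ℂ) = (((Real.log r * (1/2) : ℝ)) : ℂ) by push_cast; ring]
    rw [← Complex.ofReal_exp]
    rw [Real.rpow_def_of_pos hr]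
  · congr 1
    push_cast
    ring

lemma auxS17_factor (l : ℝ) (hl : l ≠ 0) :
    (Complex.exp (↑Real.pi * Complex.I / 4 * ((Real.sign l : ℝ) : ℂ)) *
        ((|l| ^ ((1:ℝ)/2) : ℝ) : ℂ)) *
      ((↑Real.pi / (((l/2 : ℝ) : ℂ) * Complex.I)) ^ (1/2 : ℂ))
      = (((2*Real.pi) ^ ((1:ℝ)/2) : ℝ) : ℂ) := by
  have hlabs : 0 < |l| := abs_pos.mpr hl
  set r : ℝ := 2*Real.pi/|l| with hr
  have hrpos : 0 < r := by positivity
  set s : ℝ := Real.sign l with hs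
  have hs1 : s = 1 ∨ s = -1 := by
    rcases hl.lt_or_gt with h | h
    · right; exact Real.sign_of_neg h
    · left; exact Real.sign_of_pos h
  have hbase : (↑Real.pi / (((l/2 : ℝ) : ℂ) * Complex.I)) = (r : ℂ) * (-(s:ℂ) * Complex.I) := by
    rw [div_eq_iff (mul_ne_zero (by exact_mod_cast div_ne_zero hl two_ne_zero) Complex.I_ne_zero)]
    have hII : Complex.I * Complex.I = -1 := Complex.I_mul_I
    rcases hl.lt_or_gt with h | h
    · have hsv : s = -1 := Real.sign_of_neg h
      have habs' : |l| = -l := abs_of_neg h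
      rw [hsv, hr, habs']
      have hlC : (l:ℂ) ≠ 0 := Complex.ofReal_ne_zero.mpr hl
      push_cast
      field_simp [hlC]
      ring_nf
      simp [Complex.I_sq]
    · have hsv : s = 1 := Real.sign_of_pos h
      have habs' : |l| = l := abs_of_pos h
      rw [hsv, hr, habs']
      have hlC : (l:ℂ) ≠ 0 := Complex.ofReal_ne_zero.mpr hl
      push_cast
      field_simp [hlC]
      ring_nf
      simp [Complex.I_sq]
  rw [hbase, auxS17_cpow_rI r hrpos s hs1]
  have hexp : Complex.exp (↑Real.pi * Complex.I / 4 * ((s : ℝ) : ℂ)) *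
      Complex.exp (-(s:ℂ) * (↑Real.pi/4) * Complex.I) = 1 := by
    rw [← Complex.exp_add, ← Complex.exp_zero]
    congr 1
    ring
  calc (Complex.exp (↑Real.pi * Complex.I / 4 * ((s : ℝ) : ℂ)) * ((|l| ^ ((1:ℝ)/2) : ℝ) : ℂ)) *
        (((r ^ ((1:ℝ)/2) : ℝ) : ℂ) * Complex.exp (-(s:ℂ) * (↑Real.pi/4) * Complex.I))
      = (Complex.exp (↑Real.pi * Complex.I / 4 * ((s : ℝ) : ℂ)) *
          Complex.exp (-(s:ℂ) * (↑Real.pi/4) * Complex.I)) *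
        (((|l| ^ ((1:ℝ)/2) : ℝ) : ℂ) * ((r ^ ((1:ℝ)/2) : ℝ) : ℂ)) := by ring
    _ = ((|l| ^ ((1:ℝ)/2) : ℝ) : ℂ) * ((r ^ ((1:ℝ)/2) : ℝ) : ℂ) := by rw [hexp, one_mul]
    _ = (((2*Real.pi) ^ ((1:ℝ)/2) : ℝ) : ℂ) := by
        rw [← Complex.ofReal_mul]
        congr 1
        rw [← Real.mul_rpow (le_of_lt hlabs) (le_of_lt hrpos)]
        rw [hr]
        field_simp

def auxS17_aaf (ε l : ℝ) : ℂ := (ε : ℂ) + ((l/2 : ℝ) : ℂ) * Complex.I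

lemma auxS17_aaf_re (ε l : ℝ) : (auxS17_aaf ε l).re = ε := by
  simp [auxS17_aaf]

lemma auxS17_aaf_ne (ε : ℝ) {l : ℝ} (hl : l ≠ 0) : auxS17_aaf ε l ≠ 0 := by
  intro h
  have him := congrArg Complex.im h
  simp [auxS17_aaf] at him
  exact hl him

lemma auxS17_eval (d : ℕ) (lam w : Fin d → ℝ) {ε : ℝ} (hε : 0 < ε) (t : ℂ) :
    ∫ y : Fin d → ℝ, Complex.exp (-∑ i, auxS17_aaf ε (lam i) * (y i : ℂ)^2
        + ∑ i, (t * (w i : ℂ)) * (y i : ℂ))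
      = (∏ i, (↑Real.pi / auxS17_aaf ε (lam i)) ^ (1/2 : ℂ)) *
        Complex.exp (t^2 * ((∑ i, ((w i : ℂ))^2 / auxS17_aaf ε (lam i)) / 4)) := by
  rw [GaussianFourier.integral_cexp_neg_sum_mul_add (fun i => by rw [auxS17_aaf_re]; exact hε)
    (fun i => t * (w i : ℂ))]
  rw [Finset.prod_mul_distrib, ← Complex.exp_sum]
  congr 2
  rw [Finset.sum_div, Finset.mul_sum]
  apply Finset.sum_congr rfl
  intro i _
  field_simp

lemma auxS17_int1D (r : ℝ) {ε : ℝ} (hε : 0 < ε) :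
    Integrable (fun u : ℝ => Real.exp (r * |u| - ε * u^2)) := by
  have hb : (0:ℝ) < ((ε:ℂ)).re := by simpa using hε
  have h1 : Integrable (fun u : ℝ => ‖Complex.exp (-(ε:ℂ) * u^2 + (r:ℂ) * u + 0)‖) :=
    (integrable_cexp_quadratic hb (r:ℂ) 0).norm
  have h2 : Integrable (fun u : ℝ => ‖Complex.exp (-(ε:ℂ) * u^2 + ((-r:ℝ):ℂ) * u + 0)‖) :=
    (integrable_cexp_quadratic hb ((-r:ℝ):ℂ) 0).norm
  have he1 : ∀ (ρ : ℝ) (u : ℝ), ‖Complex.exp (-(ε:ℂ) * u^2 + (ρ:ℂ) * u + 0)‖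
      = Real.exp (ρ * u - ε * u^2) := by
    intro ρ u
    rw [Complex.norm_exp]
    congr 1
    have : (-(ε:ℂ) * u^2 + (ρ:ℂ) * u + 0) = (((-ε * u^2 + ρ * u + 0 : ℝ)) : ℂ) := by
      push_cast; ring
    rw [this, Complex.ofReal_re]
    ring
  refine Integrable.mono' (g := fun u => Real.exp (r * u - ε * u^2) + Real.exp (-r * u - ε * u^2))
    ?_ ?_ ?_
  · have h1' := h1.congr (Filter.Eventually.of_forall (fun u => (he1 r u)))
    have h2' := h2.congr (Filter.Eventually.of_forall (fun u => (he1 (-r) u)))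
    exact h1'.add (by simpa using h2')
  · apply Continuous.aestronglyMeasurable
    continuity
  · filter_upwards with u
    rw [Real.norm_eq_abs, abs_of_pos (Real.exp_pos _)]
    rcases abs_choice u with h | h
    · rw [h]
      have : (0:ℝ) < Real.exp (-r * u - ε * u^2) := Real.exp_pos _
      linarith
    · rw [h]
      have heq : Real.exp (r * -u - ε * u^2) = Real.exp (-r * u - ε * u^2) := by ring_nf
      rw [heq]
      have : (0:ℝ) < Real.exp (r * u - ε * u^2) := Real.exp_pos _
      linarith

lemma auxS17_term_le_exp (x : ℝ) (hx : 0 ≤ x) (n : ℕ) :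
    x ^ n / (Nat.factorial n : ℝ) ≤ Real.exp x := by
  calc x ^ n / (Nat.factorial n : ℝ)
      ≤ ∑ k ∈ Finset.range (n+1), x ^ k / (Nat.factorial k : ℝ) := by
        apply Finset.single_le_sum (f := fun k => x ^ k / (Nat.factorial k : ℝ))
          (fun k _ => by positivity) (Finset.self_mem_range_succ n)
    _ ≤ Real.exp x := Real.sum_le_exp_of_nonneg hx _

lemma auxS17_series (d : ℕ) (lam w : Fin d → ℝ) (c : ℝ) {ε : ℝ} (hε : 0 < ε) (t : ℂ) :
    HasSum (fun n => ((∫ y : Fin d → ℝ, ((((∑ i, w i * y i) + c : ℝ)) : ℂ)^n *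
          Complex.exp (-∑ i, auxS17_aaf ε (lam i) * (y i : ℂ)^2)) / (Nat.factorial n : ℂ)) * t ^ n)
      ((∏ i, (↑Real.pi / auxS17_aaf ε (lam i)) ^ (1/2 : ℂ)) *
        Complex.exp (t * (c:ℂ) + t^2 * ((∑ i, ((w i : ℂ))^2 / auxS17_aaf ε (lam i)) / 4))) := by
  have hLc : Continuous (fun y : Fin d → ℝ => (∑ i, w i * y i) + c) := by
    apply Continuous.add _ continuous_const
    apply continuous_finset_sum
    intro i _
    exact continuous_const.mul (continuous_apply i)
  have hQc : Continuous (fun y : Fin d → ℝ => -∑ i, auxS17_aaf ε (lam i) * (y i : ℂ)^2) := by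
    apply Continuous.neg
    apply continuous_finset_sum
    intro i _
    apply continuous_const.mul
    exact (Complex.continuous_ofReal.comp (continuous_apply i)).pow 2
  set L : (Fin d → ℝ) → ℝ := fun y => (∑ i, w i * y i) + c with hL
  set Q : (Fin d → ℝ) → ℂ := fun y => -∑ i, auxS17_aaf ε (lam i) * (y i : ℂ)^2 with hQ
  set F : ℕ → (Fin d → ℝ) → ℂ :=
    fun n y => (t * ((L y : ℝ) : ℂ))^n / (Nat.factorial n : ℂ) * Complex.exp (Q y) with hF
  have hQre : ∀ y, (Q y).re = -∑ i, ε * (y i)^2 := by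
    intro y
    rw [hQ]
    simp only [Complex.neg_re, Complex.re_sum, neg_inj]
    apply Finset.sum_congr rfl
    intro i _
    rw [← Complex.ofReal_pow, mul_comm, Complex.re_ofReal_mul, auxS17_aaf_re]
    ring
  have hnormQ : ∀ y, ‖Complex.exp (Q y)‖ = Real.exp (-∑ i, ε * (y i)^2) := by
    intro y
    rw [Complex.norm_exp, hQre]
  set g : (Fin d → ℝ) → ℝ :=
    fun y => Real.exp (‖t‖ * |c|) * ∏ i, Real.exp (‖t‖ * |w i| * |y i| - ε * (y i)^2) with hg
  have hgint : Integrable g := by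
    apply Integrable.const_mul
    exact Integrable.fintype_prod (f := fun i (u:ℝ) => Real.exp (‖t‖ * |w i| * |u| - ε * u^2))
      (fun i => auxS17_int1D _ hε)
  have hgy : ∀ y, g y = Real.exp (‖t‖ * |c| + ∑ i, (‖t‖ * |w i| * |y i| - ε * (y i)^2)) := by
    intro y
    rw [hg, Real.exp_add, Real.exp_sum]
  have hnormL : ∀ y, ‖t * ((L y : ℝ) : ℂ)‖ ≤ ‖t‖ * |c| + ∑ i, ‖t‖ * |w i| * |y i| := by
    intro y
    rw [norm_mul, Complex.norm_real, Real.norm_eq_abs]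
    have h1 : |L y| ≤ |c| + ∑ i, |w i| * |y i| := by
      rw [hL]
      calc |(∑ i, w i * y i) + c| ≤ |∑ i, w i * y i| + |c| := abs_add_le _ _
        _ ≤ (∑ i, |w i * y i|) + |c| := by
            exact add_le_add_left (Finset.abs_sum_le_sum_abs _ _) _
        _ = |c| + ∑ i, |w i| * |y i| := by
            rw [add_comm]
            congr 1
            exact Finset.sum_congr rfl fun i _ => abs_mul _ _
    calc ‖t‖ * |L y| ≤ ‖t‖ * (|c| + ∑ i, |w i| * |y i|) :=
          mul_le_mul_of_nonneg_left h1 (norm_nonneg t)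
      _ = ‖t‖ * |c| + ∑ i, ‖t‖ * |w i| * |y i| := by
          rw [mul_add, Finset.mul_sum]
          congr 1
          exact Finset.sum_congr rfl fun i _ => by ring
  have hcore : ∀ y, Real.exp (‖t * ((L y : ℝ) : ℂ)‖) * ‖Complex.exp (Q y)‖ ≤ g y := by
    intro y
    rw [hnormQ, ← Real.exp_add, hgy]
    apply Real.exp_le_exp.mpr
    rw [Finset.sum_sub_distrib]
    have := hnormL y
    linarith
  have hpartial : ∀ (m : ℕ) (y : Fin d → ℝ), ∑ n ∈ Finset.range m, ‖F n y‖ ≤ g y := by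
    intro m y
    have hterm : ∀ n, ‖F n y‖ = ‖t * ((L y : ℝ) : ℂ)‖^n / (Nat.factorial n : ℝ)
        * ‖Complex.exp (Q y)‖ := by
      intro n
      rw [hF]
      simp only
      rw [norm_mul, norm_div, norm_pow, RCLike.norm_natCast]
    calc ∑ n ∈ Finset.range m, ‖F n y‖
        = (∑ n ∈ Finset.range m, ‖t * ((L y : ℝ) : ℂ)‖^n / (Nat.factorial n : ℝ))
          * ‖Complex.exp (Q y)‖ := by
          rw [Finset.sum_mul]
          exact Finset.sum_congr rfl fun n _ => hterm n
      _ ≤ Real.exp (‖t * ((L y : ℝ) : ℂ)‖) * ‖Complex.exp (Q y)‖ := by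
          apply mul_le_mul_of_nonneg_right (Real.sum_le_exp_of_nonneg (norm_nonneg _) m)
            (norm_nonneg _)
      _ ≤ g y := hcore y
  have hbound : ∀ n y, ‖F n y‖ ≤ g y := by
    intro n y
    calc ‖F n y‖ ≤ ∑ k ∈ Finset.range (n+1), ‖F k y‖ :=
          Finset.single_le_sum (f := fun k => ‖F k y‖) (fun k _ => norm_nonneg _)
            (Finset.self_mem_range_succ n)
      _ ≤ g y := hpartial (n+1) y
  have hFcont : ∀ n, Continuous (F n) := by
    intro n
    apply Continuous.mul
    · exact ((continuous_const.mul (Complex.continuous_ofReal.comp hLc)).pow n).div_const _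
    · exact Complex.continuous_exp.comp hQc
  have hFint : ∀ n, Integrable (F n) := fun n =>
    hgint.mono' (hFcont n).aestronglyMeasurable
      (Filter.Eventually.of_forall fun y => hbound n y)
  have hFsumnorm : Summable (fun n => ∫ y, ‖F n y‖) := by
    apply summable_of_sum_range_le (c := ∫ y, g y)
      (fun n => integral_nonneg fun y => norm_nonneg _)
    intro m
    rw [← integral_finset_sum _ (fun n _ => (hFint n).norm)]
    apply integral_mono (integrable_finset_sum _ fun n _ => (hFint n).norm) hgint
    intro y
    exact hpartial m y
  have hhs := hasSum_integral_of_summable_integral_norm hFint hFsumnorm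
  have htsum : ∀ y, ∑' n, F n y = Complex.exp (t * ((L y : ℝ) : ℂ)) * Complex.exp (Q y) := by
    intro y
    have h := (NormedSpace.expSeries_div_hasSum_exp (t * ((L y : ℝ) : ℂ))).mul_right
      (Complex.exp (Q y))
    rw [← Complex.exp_eq_exp_ℂ] at h
    exact h.tsum_eq
  have heval : ∫ y : Fin d → ℝ, Complex.exp (t * ((L y : ℝ) : ℂ)) * Complex.exp (Q y)
      = (∏ i, (↑Real.pi / auxS17_aaf ε (lam i)) ^ (1/2 : ℂ)) *
        Complex.exp (t * (c:ℂ) + t^2 * ((∑ i, ((w i : ℂ))^2 / auxS17_aaf ε (lam i)) / 4)) := by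
    have hpt : ∀ y : Fin d → ℝ, Complex.exp (t * ((L y : ℝ) : ℂ)) * Complex.exp (Q y)
        = Complex.exp (t * (c:ℂ)) *
          Complex.exp (-∑ i, auxS17_aaf ε (lam i) * (y i : ℂ)^2
            + ∑ i, (t * (w i : ℂ)) * (y i : ℂ)) := by
      intro y
      rw [← Complex.exp_add, ← Complex.exp_add]
      congr 1
      rw [hL, hQ]
      push_cast
      rw [mul_add, Finset.mul_sum]
      have hsc : ∀ i ∈ (Finset.univ : Finset (Fin d)),
          t * ((w i : ℂ) * (y i : ℂ)) = t * (w i:ℂ) * (y i:ℂ) := fun i _ => (mul_assoc _ _ _).symm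
      rw [Finset.sum_congr rfl hsc]
      ring
    simp_rw [hpt]
    rw [integral_const_mul, auxS17_eval d lam w hε t, ← mul_assoc, mul_comm (Complex.exp _),
      mul_assoc, ← Complex.exp_add]
  have hFn : ∀ n, (∫ y, F n y) = ((∫ y : Fin d → ℝ, (((L y : ℝ)) : ℂ)^n * Complex.exp (Q y))
      / (Nat.factorial n : ℂ)) * t ^ n := by
    intro n
    have heq : (fun y : Fin d → ℝ => F n y)
        = fun y => (t^n / (Nat.factorial n : ℂ)) * ((((L y : ℝ)) : ℂ)^n * Complex.exp (Q y)) := by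
      funext y
      rw [hF]
      simp only
      rw [mul_pow]
      ring
    rw [heq, integral_const_mul]
    ring
  have hfinal : (fun n => ∫ y, F n y)
      = fun n => ((∫ y : Fin d → ℝ, (((L y : ℝ)) : ℂ)^n * Complex.exp (Q y))
        / (Nat.factorial n : ℂ)) * t ^ n := funext hFn
  rw [hfinal] at hhs
  have htsum' : (fun y => ∑' n, F n y)
      = fun y => Complex.exp (t * ((L y : ℝ) : ℂ)) * Complex.exp (Q y) := funext htsum
  rw [htsum', heval] at hhs
  exact hhs

lemma auxS17_red (d : ℕ) (S : EuclideanSpace ℝ (Fin d) →ₗ[ℝ] EuclideanSpace ℝ (Fin d))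
    (lam : Fin d → ℝ) (b : OrthonormalBasis (Fin d) ℝ (EuclideanSpace ℝ (Fin d)))
    (hdiag : ∀ i, S (b i) = lam i • b i) (v : EuclideanSpace ℝ (Fin d)) (c : ℝ)
    (f : ℝ → ℂ) (N : ℂ) (ε : ℝ) :
    ∫ x : EuclideanSpace ℝ (Fin d), f ((inner ℝ v x : ℝ) + c) *
        Complex.exp (-((ε * ‖x‖^2 : ℝ) : ℂ)) *
        (N * Complex.exp (-(Complex.I/2) * ((inner ℝ x (S x) : ℝ) : ℂ)))
      = N * ∫ y : Fin d → ℝ, f ((∑ i, b.repr v i * y i) + c) *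
          Complex.exp (-∑ i, auxS17_aaf ε (lam i) * (y i : ℂ)^2) := by
  set e := (MeasurableEquiv.toLp 2 (Fin d → ℝ)).symm with he
  set φ : (Fin d → ℝ) → EuclideanSpace ℝ (Fin d) := fun y => b.repr.symm (e.symm y) with hφdef
  have hφ : MeasurePreserving φ volume volume :=
    (b.measurePreserving_repr_symm).comp
      ((EuclideanSpace.volume_preserving_symm_measurableEquiv_toLp (Fin d)).symm e)
  have hemb : MeasurableEmbedding φ :=
    (b.repr.symm.toHomeomorph.measurableEmbedding).comp e.symm.measurableEmbedding
  rw [← hφ.integral_comp hemb]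
  rw [← integral_const_mul]
  refine integral_congr_ae (Filter.Eventually.of_forall fun y => ?_)
  have hcoord : ∀ i, e.symm y i = y i := fun i => rfl
  have hrepr : b.repr (φ y) = e.symm y := by
    rw [hφdef]
    simp only [LinearIsometryEquiv.apply_symm_apply]
  -- P1
  have hP1 : (inner ℝ v (φ y) : ℝ) = ∑ i, b.repr v i * y i := by
    rw [← b.repr.inner_map_map v (φ y), hrepr]
    rw [PiLp.inner_apply]
    apply Finset.sum_congr rfl
    intro i _
    simp [hcoord i, RCLike.inner_apply, mul_comm]
  -- P2
  have hP2 : ‖φ y‖^2 = ∑ i, (y i)^2 := by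
    rw [hφdef]
    simp only [LinearIsometryEquiv.norm_map]
    rw [EuclideanSpace.norm_eq, Real.sq_sqrt (Finset.sum_nonneg fun i _ => sq_nonneg _)]
    exact Finset.sum_congr rfl fun i _ => by rw [Real.norm_eq_abs, hcoord i, _root_.sq_abs]
  -- P3
  have hSφ : S (φ y) = ∑ j, (y j * lam j) • b j := by
    have hx : φ y = ∑ j, y j • b j := by
      show b.repr.symm (e.symm y) = _
      rw [← b.sum_repr_symm]
      exact Finset.sum_congr rfl fun j _ => by rw [hcoord j]
    rw [hx, map_sum]
    apply Finset.sum_congr rfl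
    intro j _
    rw [_root_.map_smul, hdiag j, smul_smul]
  have hP3 : (inner ℝ (φ y) (S (φ y)) : ℝ) = ∑ i, lam i * (y i)^2 := by
    rw [← b.repr.inner_map_map (φ y) (S (φ y)), hrepr, PiLp.inner_apply]
    have hSr : ∀ i, b.repr (S (φ y)) i = y i * lam i := by
      intro i
      rw [b.repr_apply_apply, hSφ, inner_sum]
      rw [Finset.sum_eq_single i]
      · rw [real_inner_smul_right]
        have h1 : (inner ℝ (b i) (b i) : ℝ) = 1 := by
          rw [real_inner_self_eq_norm_sq, b.orthonormal.1 i, one_pow]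
        rw [h1, mul_one]
      · intro j _ hji
        rw [real_inner_smul_right, b.orthonormal.2 (Ne.symm hji), mul_zero]
      · intro h
        exact absurd (Finset.mem_univ i) h
    apply Finset.sum_congr rfl
    intro i _
    rw [hSr i]
    simp [hcoord i, RCLike.inner_apply]
    ring
  -- assemble
  beta_reduce
  rw [hP1]
  have e2 : Complex.exp (-((ε * ‖φ y‖^2 : ℝ) : ℂ)) *
      Complex.exp (-(Complex.I/2) * ((inner ℝ (φ y) (S (φ y)) : ℝ) : ℂ))
      = Complex.exp (-∑ i, auxS17_aaf ε (lam i) * (y i : ℂ)^2) := by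
    rw [← Complex.exp_add]
    congr 1
    rw [hP2, hP3]
    have hterm : ∀ i ∈ (Finset.univ : Finset (Fin d)),
        auxS17_aaf ε (lam i) * (y i : ℂ)^2
          = (ε : ℂ) * (y i : ℂ)^2 + Complex.I/2 * ((lam i : ℂ) * (y i : ℂ)^2) := by
      intro i _
      rw [auxS17_aaf]
      push_cast
      ring
    rw [Finset.sum_congr rfl hterm, Finset.sum_add_distrib, ← Finset.mul_sum, ← Finset.mul_sum]
    push_cast
    ring
  calc f ((∑ i, b.repr v i * y i) + c) * Complex.exp (-((ε * ‖φ y‖^2 : ℝ) : ℂ)) *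
        (N * Complex.exp (-(Complex.I/2) * ((inner ℝ (φ y) (S (φ y)) : ℝ) : ℂ)))
      = N * (f ((∑ i, b.repr v i * y i) + c) *
          (Complex.exp (-((ε * ‖φ y‖^2 : ℝ) : ℂ)) *
            Complex.exp (-(Complex.I/2) * ((inner ℝ (φ y) (S (φ y)) : ℝ) : ℂ)))) := by ring
    _ = N * (f ((∑ i, b.repr v i * y i) + c) *
          Complex.exp (-∑ i, auxS17_aaf ε (lam i) * (y i : ℂ)^2)) := by rw [e2]

lemma auxS17_J (d : ℕ) (lam w : Fin d → ℝ) (c : ℝ) {ε : ℝ} (hε : 0 < ε) (n : ℕ) :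
    ∫ y : Fin d → ℝ, ((((∑ i, w i * y i) + c : ℝ)) : ℂ)^n *
        Complex.exp (-∑ i, auxS17_aaf ε (lam i) * (y i : ℂ)^2)
      = (Nat.factorial n : ℂ) * ((∏ i, (↑Real.pi / auxS17_aaf ε (lam i)) ^ (1/2 : ℂ)) *
          auxS17_h (c:ℂ) (∑ i, ((w i : ℂ))^2 / auxS17_aaf ε (lam i)) n) := by
  have h1 : ∀ t : ℂ, HasSum (fun m => ((∫ y : Fin d → ℝ, ((((∑ i, w i * y i) + c : ℝ)) : ℂ)^m *
        Complex.exp (-∑ i, auxS17_aaf ε (lam i) * (y i : ℂ)^2)) / (Nat.factorial m : ℂ)) * t ^ m)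
      ((∏ i, (↑Real.pi / auxS17_aaf ε (lam i)) ^ (1/2 : ℂ)) *
        Complex.exp (t * (c:ℂ) + t^2 * ((∑ i, ((w i : ℂ))^2 / auxS17_aaf ε (lam i)) / 4))) :=
    fun t => auxS17_series d lam w c hε t
  have h2 : ∀ t : ℂ, HasSum (fun m =>
      ((∏ i, (↑Real.pi / auxS17_aaf ε (lam i)) ^ (1/2 : ℂ)) *
        auxS17_h (c:ℂ) (∑ i, ((w i : ℂ))^2 / auxS17_aaf ε (lam i)) m) * t ^ m)
      ((∏ i, (↑Real.pi / auxS17_aaf ε (lam i)) ^ (1/2 : ℂ)) *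
        Complex.exp (t * (c:ℂ) + t^2 * ((∑ i, ((w i : ℂ))^2 / auxS17_aaf ε (lam i)) / 4))) :=
    fun t => auxS17_series2 _ _ _ t
  have heq := auxS17_coeff_unique h1 h2
  have hcf := congrFun heq n
  have hfac : (Nat.factorial n : ℂ) ≠ 0 := Nat.cast_ne_zero.mpr (Nat.factorial_ne_zero n)
  rw [div_eq_iff hfac] at hcf
  rw [hcf]
  ring

lemma auxS17_tendsto_aaf (l : ℝ) :
    Filter.Tendsto (fun ε : ℝ => auxS17_aaf ε l) (𝓝 0) (𝓝 (auxS17_aaf 0 l)) := by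
  have h : Continuous fun ε : ℝ => auxS17_aaf ε l := by
    unfold auxS17_aaf
    exact Complex.continuous_ofReal.add continuous_const
  exact h.continuousAt

lemma auxS17_base_val (l : ℝ) (hl : l ≠ 0) :
    (↑Real.pi / auxS17_aaf 0 l) = ((-(2*Real.pi/l) : ℝ) : ℂ) * Complex.I := by
  have hlC : (l : ℂ) ≠ 0 := Complex.ofReal_ne_zero.mpr hl
  rw [div_eq_iff (auxS17_aaf_ne 0 hl)]
  rw [auxS17_aaf]
  push_cast
  field_simp
  ring_nf
  simp [Complex.I_sq]

lemma auxS17_slit (l : ℝ) (hl : l ≠ 0) :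
    (↑Real.pi / auxS17_aaf 0 l) ∈ Complex.slitPlane := by
  rw [Complex.mem_slitPlane_iff]
  right
  rw [auxS17_base_val l hl]
  have h2 : 2*Real.pi/l ≠ 0 := div_ne_zero (by positivity) hl
  simpa using h2

lemma auxS17_tendsto_A (d : ℕ) (lam : Fin d → ℝ) (hinv : ∀ i, lam i ≠ 0) :
    Filter.Tendsto (fun ε : ℝ => ∏ i, (↑Real.pi / auxS17_aaf ε (lam i)) ^ (1/2:ℂ)) (𝓝[>] (0:ℝ))
      (𝓝 (∏ i, (↑Real.pi / auxS17_aaf 0 (lam i)) ^ (1/2:ℂ))) := by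
  apply Filter.Tendsto.mono_left _ nhdsWithin_le_nhds
  apply tendsto_finset_prod
  intro i _
  have h1 : Filter.Tendsto (fun ε : ℝ => ↑Real.pi / auxS17_aaf ε (lam i)) (𝓝 0)
      (𝓝 (↑Real.pi / auxS17_aaf 0 (lam i))) :=
    tendsto_const_nhds.div (auxS17_tendsto_aaf (lam i)) (auxS17_aaf_ne 0 (hinv i))
  have h2 := continuousAt_cpow_const (b := (1/2:ℂ)) (auxS17_slit (lam i) (hinv i))
  exact h2.tendsto.comp h1

lemma auxS17_tendsto_q (d : ℕ) (lam w : Fin d → ℝ) (hinv : ∀ i, lam i ≠ 0) :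
    Filter.Tendsto (fun ε : ℝ => ∑ i, ((w i : ℂ))^2 / auxS17_aaf ε (lam i)) (𝓝[>] (0:ℝ))
      (𝓝 (∑ i, ((w i : ℂ))^2 / auxS17_aaf 0 (lam i))) := by
  apply Filter.Tendsto.mono_left _ nhdsWithin_le_nhds
  apply tendsto_finset_sum
  intro i _
  exact tendsto_const_nhds.div (auxS17_tendsto_aaf (lam i)) (auxS17_aaf_ne 0 (hinv i))

lemma auxS17_h_cont (c : ℂ) (n : ℕ) : Continuous (fun q : ℂ => auxS17_h c q n) := by
  unfold auxS17_h
  apply continuous_finset_sum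
  intro kl _
  apply Continuous.mul continuous_const
  by_cases h : Even kl.2
  · simp only [auxS17_Qg, if_pos h]
    exact ((continuous_id.div_const 4).pow _).div_const _
  · simp only [auxS17_Qg, if_neg h]
    exact continuous_const

lemma auxS17_NA (d : ℕ) (lam : Fin d → ℝ) (hinv : ∀ i, lam i ≠ 0) :
    ((1:ℂ) / ((((2 * Real.pi) ^ ((d : ℝ) / 2) : ℝ) : ℂ) /
        ∏ i, (Complex.exp (↑Real.pi * Complex.I / 4 * ((Real.sign (lam i) : ℝ) : ℂ)) *
          ((|lam i| ^ ((1:ℝ)/2) : ℝ) : ℂ)))) *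
      (∏ i, (↑Real.pi / auxS17_aaf 0 (lam i)) ^ (1/2 : ℂ)) = 1 := by
  have hR : ((2*Real.pi) ^ ((d:ℝ)/2) : ℝ) ≠ 0 := by positivity
  have hkey : (∏ i, (Complex.exp (↑Real.pi * Complex.I / 4 * ((Real.sign (lam i) : ℝ):ℂ)) *
      ((|lam i| ^ ((1:ℝ)/2) : ℝ):ℂ))) * (∏ i, (↑Real.pi / auxS17_aaf 0 (lam i)) ^ (1/2:ℂ))
      = (((2*Real.pi) ^ ((d:ℝ)/2) : ℝ) : ℂ) := by
    rw [← Finset.prod_mul_distrib]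
    have hfac : ∀ i ∈ (Finset.univ : Finset (Fin d)),
        (Complex.exp (↑Real.pi * Complex.I / 4 * ((Real.sign (lam i) : ℝ):ℂ)) *
          ((|lam i| ^ ((1:ℝ)/2) : ℝ):ℂ)) * ((↑Real.pi / auxS17_aaf 0 (lam i)) ^ (1/2:ℂ))
        = (((2*Real.pi) ^ ((1:ℝ)/2) : ℝ) : ℂ) := by
      intro i _
      have hb : ↑Real.pi / auxS17_aaf 0 (lam i)
          = ↑Real.pi / (((lam i/2 : ℝ):ℂ) * Complex.I) := by
        rw [auxS17_aaf, Complex.ofReal_zero, zero_add]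
      rw [hb]
      exact auxS17_factor (lam i) (hinv i)
    rw [Finset.prod_congr rfl hfac, Finset.prod_const, Finset.card_univ, Fintype.card_fin]
    rw [← Complex.ofReal_pow]
    congr 1
    rw [← Real.rpow_natCast ((2*Real.pi) ^ ((1:ℝ)/2)) d, ← Real.rpow_mul (by positivity)]
    congr 1
    ring
  rw [one_div_div, div_mul_eq_mul_div, hkey, div_self (Complex.ofReal_ne_zero.mpr hR)]

lemma auxS17_expeval (d : ℕ) (lam w : Fin d → ℝ) (c : ℝ) {ε : ℝ} (hε : 0 < ε) (t : ℂ) :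
    ∫ y : Fin d → ℝ, Complex.exp (t * ((((∑ i, w i * y i) + c : ℝ)) : ℂ)) *
        Complex.exp (-∑ i, auxS17_aaf ε (lam i) * (y i : ℂ)^2)
      = (∏ i, (↑Real.pi / auxS17_aaf ε (lam i)) ^ (1/2 : ℂ)) *
        Complex.exp (t * (c:ℂ) + t^2 * ((∑ i, ((w i : ℂ))^2 / auxS17_aaf ε (lam i)) / 4)) := by
  have hpt : ∀ y : Fin d → ℝ,
      Complex.exp (t * ((((∑ i, w i * y i) + c : ℝ)) : ℂ)) *
        Complex.exp (-∑ i, auxS17_aaf ε (lam i) * (y i : ℂ)^2)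
      = Complex.exp (t * (c:ℂ)) *
        Complex.exp (-∑ i, auxS17_aaf ε (lam i) * (y i : ℂ)^2
          + ∑ i, (t * (w i : ℂ)) * (y i : ℂ)) := by
    intro y
    rw [← Complex.exp_add, ← Complex.exp_add]
    congr 1
    push_cast
    rw [mul_add, Finset.mul_sum]
    have hsc : ∀ i ∈ (Finset.univ : Finset (Fin d)),
        t * ((w i : ℂ) * (y i : ℂ)) = t * (w i:ℂ) * (y i:ℂ) := fun i _ => (mul_assoc _ _ _).symm
    rw [Finset.sum_congr rfl hsc]
    ring
  simp_rw [hpt]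
  rw [integral_const_mul, auxS17_eval d lam w hε t, ← mul_assoc, mul_comm (Complex.exp _),
    mul_assoc, ← Complex.exp_add]

/-- Let `dμ(x) = (1/Z) e^{−(i/2)⟨x,Sx⟩}dx` be the normalized non-degenerate centered
oscillatory Gauss measure (with `S` diagonalized by an orthonormal basis with
nonzero eigenvalues `lam`, `Z = (2π)^{d/2}/∏√(iλ_k)`), and `Y(x) = ⟨v,x⟩ + c`
an affine map whose first and second regulated moments `m₁, m₂` satisfy
`m₂ = m₁²`.  Then `∫_∼ Yⁿ dμ = m₁ⁿ` for all `n`, and `∫_∼ e^Y dμ = exp(m₁)`. -/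
theorem stmt_17 (d : ℕ)
    (S : EuclideanSpace ℝ (Fin d) →ₗ[ℝ] EuclideanSpace ℝ (Fin d))
    (lam : Fin d → ℝ)
    (b : OrthonormalBasis (Fin d) ℝ (EuclideanSpace ℝ (Fin d)))
    (hdiag : ∀ i, S (b i) = lam i • b i) (hinv : ∀ i, lam i ≠ 0)
    (v : EuclideanSpace ℝ (Fin d)) (c : ℝ) (m1 m2 : ℂ)
    (hm1 : Tendsto (fun ε : ℝ =>
        ∫ x : EuclideanSpace ℝ (Fin d),
          (((inner ℝ v x : ℝ) + c : ℝ) : ℂ) *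
            Complex.exp (-((ε * ‖x‖ ^ 2 : ℝ) : ℂ)) *
            ((1 : ℂ) / ((((2 * Real.pi) ^ ((d : ℝ) / 2) : ℝ) : ℂ) /
                ∏ i, (Complex.exp (Real.pi * Complex.I / 4 * (Real.sign (lam i) : ℝ)) *
                  ((|lam i| ^ ((1 : ℝ) / 2) : ℝ) : ℂ))) *
              Complex.exp (-(Complex.I / 2) * ((inner ℝ x (S x) : ℝ) : ℂ))))
      (𝓝[>] (0 : ℝ)) (𝓝 m1))
    (hm2 : Tendsto (fun ε : ℝ =>
        ∫ x : EuclideanSpace ℝ (Fin d),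
          (((inner ℝ v x : ℝ) + c : ℝ) : ℂ) ^ 2 *
            Complex.exp (-((ε * ‖x‖ ^ 2 : ℝ) : ℂ)) *
            ((1 : ℂ) / ((((2 * Real.pi) ^ ((d : ℝ) / 2) : ℝ) : ℂ) /
                ∏ i, (Complex.exp (Real.pi * Complex.I / 4 * (Real.sign (lam i) : ℝ)) *
                  ((|lam i| ^ ((1 : ℝ) / 2) : ℝ) : ℂ))) *
              Complex.exp (-(Complex.I / 2) * ((inner ℝ x (S x) : ℝ) : ℂ))))
      (𝓝[>] (0 : ℝ)) (𝓝 m2))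
    (hcov : m2 = m1 ^ 2) :
    (∀ n : ℕ,
      Tendsto (fun ε : ℝ =>
          ∫ x : EuclideanSpace ℝ (Fin d),
            (((inner ℝ v x : ℝ) + c : ℝ) : ℂ) ^ n *
              Complex.exp (-((ε * ‖x‖ ^ 2 : ℝ) : ℂ)) *
              ((1 : ℂ) / ((((2 * Real.pi) ^ ((d : ℝ) / 2) : ℝ) : ℂ) /
                  ∏ i, (Complex.exp (Real.pi * Complex.I / 4 * (Real.sign (lam i) : ℝ)) *
                    ((|lam i| ^ ((1 : ℝ) / 2) : ℝ) : ℂ))) *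
                Complex.exp (-(Complex.I / 2) * ((inner ℝ x (S x) : ℝ) : ℂ))))
        (𝓝[>] (0 : ℝ)) (𝓝 (m1 ^ n)))
    ∧
    Tendsto (fun ε : ℝ =>
        ∫ x : EuclideanSpace ℝ (Fin d),
          Complex.exp ((((inner ℝ v x : ℝ) + c : ℝ) : ℂ)) *
            Complex.exp (-((ε * ‖x‖ ^ 2 : ℝ) : ℂ)) *
            ((1 : ℂ) / ((((2 * Real.pi) ^ ((d : ℝ) / 2) : ℝ) : ℂ) /
                ∏ i, (Complex.exp (Real.pi * Complex.I / 4 * (Real.sign (lam i) : ℝ)) *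
                  ((|lam i| ^ ((1 : ℝ) / 2) : ℝ) : ℂ))) *
              Complex.exp (-(Complex.I / 2) * ((inner ℝ x (S x) : ℝ) : ℂ))))
      (𝓝[>] (0 : ℝ)) (𝓝 (Complex.exp m1)) := by
  set Nc : ℂ := (1 : ℂ) / ((((2 * Real.pi) ^ ((d : ℝ) / 2) : ℝ) : ℂ) /
      ∏ i, (Complex.exp (Real.pi * Complex.I / 4 * (Real.sign (lam i) : ℝ)) *
        ((|lam i| ^ ((1 : ℝ) / 2) : ℝ) : ℂ))) with hNc
  set A : ℝ → ℂ := fun ε => ∏ i, (↑Real.pi / auxS17_aaf ε (lam i)) ^ (1/2:ℂ) with hA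
  set qq : ℝ → ℂ := fun ε => ∑ i, ((b.repr v i : ℂ))^2 / auxS17_aaf ε (lam i) with hqq
  have hNA0 : Nc * A 0 = 1 := auxS17_NA d lam hinv
  have hAlim : Tendsto A (𝓝[>] (0:ℝ)) (𝓝 (A 0)) := auxS17_tendsto_A d lam hinv
  have hqlim : Tendsto qq (𝓝[>] (0:ℝ)) (𝓝 (qq 0)) :=
    auxS17_tendsto_q d lam (fun i => b.repr v i) hinv
  -- the key computation for moments
  have key : ∀ n : ℕ, Tendsto (fun ε : ℝ =>
      ∫ x : EuclideanSpace ℝ (Fin d),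
        (((inner ℝ v x : ℝ) + c : ℝ) : ℂ) ^ n *
          Complex.exp (-((ε * ‖x‖ ^ 2 : ℝ) : ℂ)) *
          (Nc * Complex.exp (-(Complex.I / 2) * ((inner ℝ x (S x) : ℝ) : ℂ))))
      (𝓝[>] (0 : ℝ))
      (𝓝 (Nc * ((Nat.factorial n : ℂ) * (A 0 * auxS17_h (c:ℂ) (qq 0) n)))) := by
    intro n
    have hev : ∀ ε ∈ Set.Ioi (0:ℝ),
        (∫ x : EuclideanSpace ℝ (Fin d),
          (((inner ℝ v x : ℝ) + c : ℝ) : ℂ) ^ n *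
            Complex.exp (-((ε * ‖x‖ ^ 2 : ℝ) : ℂ)) *
            (Nc * Complex.exp (-(Complex.I / 2) * ((inner ℝ x (S x) : ℝ) : ℂ))))
        = Nc * ((Nat.factorial n : ℂ) * (A ε * auxS17_h (c:ℂ) (qq ε) n)) := by
      intro ε hε
      rw [auxS17_red d S lam b hdiag v c (fun s => ((s : ℝ) : ℂ)^n) Nc ε]
      rw [auxS17_J d lam (fun i => b.repr v i) c hε n]
    have hlim : Tendsto (fun ε => Nc * ((Nat.factorial n : ℂ) * (A ε * auxS17_h (c:ℂ) (qq ε) n)))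
        (𝓝[>] (0:ℝ)) (𝓝 (Nc * ((Nat.factorial n : ℂ) * (A 0 * auxS17_h (c:ℂ) (qq 0) n)))) := by
      apply Tendsto.const_mul
      apply Tendsto.const_mul
      exact hAlim.mul (((auxS17_h_cont (c:ℂ) n).continuousAt).tendsto.comp hqlim)
    apply hlim.congr'
    filter_upwards [eventually_mem_nhdsWithin] with ε hε
    exact (hev ε hε).symm
  have hm1v : m1 = (c : ℂ) := by
    have hk1 := key 1
    have h1u : m1 = Nc * ((Nat.factorial 1 : ℂ) * (A 0 * auxS17_h (c:ℂ) (qq 0) 1)) :=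
      tendsto_nhds_unique hm1 (by simpa only [pow_one] using hk1)
    rw [h1u, auxS17_h_one]
    simp only [Nat.factorial_one, Nat.cast_one, one_mul]
    rw [← mul_assoc, hNA0, one_mul]
  have hm2v : m2 = (c:ℂ)^2 + qq 0 / 2 := by
    have h2u : m2 = Nc * ((Nat.factorial 2 : ℂ) * (A 0 * auxS17_h (c:ℂ) (qq 0) 2)) :=
      tendsto_nhds_unique hm2 (key 2)
    rw [h2u, auxS17_h_two]
    have : Nc * ((Nat.factorial 2 : ℂ) * (A 0 * ((c:ℂ)^2/2 + qq 0/4)))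
        = (Nc * A 0) * (2 * ((c:ℂ)^2/2 + qq 0/4)) := by
      norm_num [Nat.factorial]
      ring
    rw [this, hNA0, one_mul]
    ring
  have hq0 : qq 0 = 0 := by
    have h := hcov
    rw [hm2v, hm1v] at h
    linear_combination 2 * h
  constructor
  · intro n
    have hval : Nc * ((Nat.factorial n : ℂ) * (A 0 * auxS17_h (c:ℂ) (qq 0) n)) = m1 ^ n := by
      rw [hq0, auxS17_h_qzero, hm1v]
      have hfac : (Nat.factorial n : ℂ) ≠ 0 := Nat.cast_ne_zero.mpr (Nat.factorial_ne_zero n)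
      have hrr : Nc * ((Nat.factorial n : ℂ) * (A 0 * ((c:ℂ)^n / (Nat.factorial n : ℂ))))
          = (Nc * A 0) * (((Nat.factorial n : ℂ) / (Nat.factorial n : ℂ)) * (c:ℂ)^n) := by
        ring
      rw [hrr, div_self hfac, hNA0]
      ring
    have := key n
    rw [hval] at this
    exact this
  · -- exponential part
    have hev : ∀ ε ∈ Set.Ioi (0:ℝ),
        (∫ x : EuclideanSpace ℝ (Fin d),
          Complex.exp ((((inner ℝ v x : ℝ) + c : ℝ) : ℂ)) *
            Complex.exp (-((ε * ‖x‖ ^ 2 : ℝ) : ℂ)) *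
            (Nc * Complex.exp (-(Complex.I / 2) * ((inner ℝ x (S x) : ℝ) : ℂ))))
        = Nc * (A ε * Complex.exp ((c:ℂ) + qq ε / 4)) := by
      intro ε hε
      rw [auxS17_red d S lam b hdiag v c (fun s => Complex.exp ((s : ℝ) : ℂ)) Nc ε]
      have he1 : ∀ y : Fin d → ℝ,
          Complex.exp ((((∑ i, b.repr v i * y i) + c : ℝ)) : ℂ)
          = Complex.exp ((1:ℂ) * ((((∑ i, b.repr v i * y i) + c : ℝ)) : ℂ)) := by
        intro y; rw [one_mul]
      simp_rw [he1]
      rw [auxS17_expeval d lam (fun i => b.repr v i) c hε 1]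
      norm_num
      exact Or.inl rfl
    have hlim : Tendsto (fun ε => Nc * (A ε * Complex.exp ((c:ℂ) + qq ε / 4)))
        (𝓝[>] (0:ℝ)) (𝓝 (Nc * (A 0 * Complex.exp ((c:ℂ) + qq 0 / 4)))) := by
      apply Tendsto.const_mul
      apply hAlim.mul
      apply (Complex.continuous_exp.continuousAt (x := (c:ℂ) + qq 0/4)).tendsto.comp
      exact tendsto_const_nhds.add (hqlim.div_const 4)
    have hval : Nc * (A 0 * Complex.exp ((c:ℂ) + qq 0 / 4)) = Complex.exp m1 := by
      rw [hq0, hm1v]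
      norm_num
      rw [← mul_assoc, hNA0, one_mul]
    apply (hval ▸ hlim).congr'
    filter_upwards [eventually_mem_nhdsWithin] with ε hε
    exact (hev ε hε).symm

end
end
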